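/- arXiv:1912.06204 — 5 statements merged into one kernel-verified Lean document; each statement's English description precedes it below -/
import Mathlib

section
/- Let n be a nilpotent real Lie algebra and D ∈ Der(n). For any c > 0, X ∈ n and h ∈ Aut(n), the map D' := c(hDh⁻¹ − ad_n X) is a derivation of n, and the solvable Lie algebras s_{D'} and s_D are isomorphic as Lie algebras. -/
noncomputable section

variable {n : Type*} [LieRing n] [LieAlgebra ℝ n]

/-- The bracket of the solvable extension `s_D = ℝ f ⊕ n`, where `f = (1, 0)`:
`[(a,X), (b,Y)] = (0, a • D Y - b • D X + ⁅X, Y⁆)`. -/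
def sBrFun (D : n →ₗ[ℝ] n) (p q : ℝ × n) : ℝ × n :=
  (0, p.1 • D q.2 - q.1 • D p.2 + ⁅p.2, q.2⁆)

/-- For a derivation `D` of a nilpotent Lie algebra `n`, any `c > 0`, `X ∈ n` and
`h ∈ Aut(n)`, the map `D' = c (h D h⁻¹ - ad_n X)` is again a derivation of `n`, and the
solvable Lie algebras `s_{D'}` and `s_D` are isomorphic. -/
theorem sD_isomorphic_of_conjugate [LieRing.IsNilpotent n]
    (D : n →ₗ[ℝ] n) (hD : ∀ x y : n, D ⁅x, y⁆ = ⁅D x, y⁆ + ⁅x, D y⁆)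
    (c : ℝ) (hc : 0 < c) (X : n) (h : n ≃ₗ⁅ℝ⁆ n)
    (D' : n →ₗ[ℝ] n)
    (hD' : D' = c • (h.toLinearEquiv.toLinearMap ∘ₗ D ∘ₗ h.symm.toLinearEquiv.toLinearMap
      - LieAlgebra.ad ℝ n X)) :
    (∀ x y : n, D' ⁅x, y⁆ = ⁅D' x, y⁆ + ⁅x, D' y⁆) ∧
    ∃ e : (ℝ × n) ≃ₗ[ℝ] (ℝ × n), ∀ p q : ℝ × n,
      e (sBrFun D' p q) = sBrFun D (e p) (e q) := by
  have hc0 : c ≠ 0 := ne_of_gt hc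
  have coeL : ∀ v : n, h.toLinearEquiv.toLinearMap v = h v := fun _ => rfl
  have coeLs : ∀ v : n, h.symm.toLinearEquiv.toLinearMap v = h.symm v := fun _ => rfl
  have ha : ∀ x y : n, h (x + y) = h x + h y := fun x y => map_add h.toLinearEquiv x y
  have hsa : ∀ x y : n, h.symm (x + y) = h.symm x + h.symm y :=
    fun x y => map_add h.symm.toLinearEquiv x y
  have hsb : ∀ x y : n, h (x - y) = h x - h y := fun x y => map_sub h.toLinearEquiv x y
  have hssb : ∀ x y : n, h.symm (x - y) = h.symm x - h.symm y :=
    fun x y => map_sub h.symm.toLinearEquiv x y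
  have hsm : ∀ (t : ℝ) (x : n), h (t • x) = t • h x := fun t x => map_smul h.toLinearEquiv t x
  have hssm : ∀ (t : ℝ) (x : n), h.symm (t • x) = t • h.symm x :=
    fun t x => map_smul h.symm.toLinearEquiv t x
  have hn : ∀ x : n, h (-x) = -h x := fun x => map_neg h.toLinearEquiv x
  have hz : h 0 = 0 := map_zero h.toLinearEquiv
  have hsz : h.symm 0 = 0 := map_zero h.symm.toLinearEquiv
  have hDapp : ∀ v : n, D' v = c • (h (D (h.symm v)) - ⁅X, v⁆) := by
    intro v
    simp [hD', LieAlgebra.ad_apply, coeL, coeLs]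
  constructor
  · intro x y
    have hsymm : h.symm ⁅x, y⁆ = ⁅h.symm x, h.symm y⁆ := h.symm.map_lie x y
    rw [hDapp, hDapp, hDapp, hsymm, hD, ha, leibniz_lie]
    have e1 : h ⁅D (h.symm x), h.symm y⁆ = ⁅h (D (h.symm x)), y⁆ := by
      rw [h.map_lie, LieEquiv.apply_symm_apply]
    have e2 : h ⁅h.symm x, D (h.symm y)⁆ = ⁅x, h (D (h.symm y))⁆ := by
      rw [h.map_lie, LieEquiv.apply_symm_apply]
    rw [e1, e2]
    simp only [smul_sub, smul_add, sub_lie, lie_sub, smul_lie, lie_smul]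
    abel
  · refine ⟨LinearEquiv.ofLinear
      ((LinearMap.prod ((c • LinearMap.id : ℝ →ₗ[ℝ] ℝ) ∘ₗ LinearMap.fst ℝ ℝ n)
        ((h.symm.toLinearEquiv.toLinearMap ∘ₗ LinearMap.snd ℝ ℝ n) -
          (LinearMap.toSpanSingleton ℝ n (c • h.symm X)) ∘ₗ LinearMap.fst ℝ ℝ n)))
      ((LinearMap.prod ((c⁻¹ • LinearMap.id : ℝ →ₗ[ℝ] ℝ) ∘ₗ LinearMap.fst ℝ ℝ n)
        ((h.toLinearEquiv.toLinearMap ∘ₗ LinearMap.snd ℝ ℝ n) +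
          (LinearMap.toSpanSingleton ℝ n X) ∘ₗ LinearMap.fst ℝ ℝ n)))
      ?_ ?_, ?_⟩
    · ext p <;>
        simp [LinearMap.toSpanSingleton_apply, smul_smul, hc0, coeL, coeLs,
          hsa, hz, hsz, LieEquiv.symm_apply_apply, mul_comm]
    · ext p <;>
        simp [LinearMap.toSpanSingleton_apply, smul_smul, hc0, coeL, coeLs,
          hssb, hssm, hz, hsz, LieEquiv.apply_symm_apply, hsb, hsm, hn, mul_comm]
    · intro p q
      obtain ⟨a, u⟩ := p
      obtain ⟨b, v⟩ := q
      simp only [sBrFun, LinearEquiv.ofLinear_apply, LinearMap.prod_apply, Function.prod,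
        LinearMap.comp_apply, LinearMap.fst_apply, LinearMap.snd_apply,
        LinearMap.smul_apply, LinearMap.id_apply, LinearMap.sub_apply,
        LinearMap.toSpanSingleton_apply, coeL, coeLs]
      refine Prod.ext (by simp) ?_
      simp only [hDapp]
      have hsymm : h.symm ⁅u, v⁆ = ⁅h.symm u, h.symm v⁆ := h.symm.map_lie u v
      have hsX : ∀ w : n, h.symm ⁅X, w⁆ = ⁅h.symm X, h.symm w⁆ := fun w => h.symm.map_lie X w
      simp only [hsa, hssb, hssm, hsymm, hsX, map_sub, map_smul, LieEquiv.symm_apply_apply]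
      simp only [smul_sub, sub_lie, lie_sub, smul_lie, lie_smul, smul_smul, smul_neg,
        smul_zero, zero_smul, smul_add, lie_self, sub_zero, zero_mul, mul_zero, smul_eq_mul]
      rw [show ⁅h.symm u, h.symm X⁆ = -⁅h.symm X, h.symm u⁆ from (lie_skew _ _).symm]
      module


end
end

section
/- Let n be a nilpotent real Lie algebra. The set Der(n)_rn of Ricci negative derivations of n is an open subset of Der(n), is invariant under multiplication by positive scalars (i.e., it is an open cone), and is invariant under conjugation by Aut(n): if D ∈ Der(n)_rn, c > 0 and h ∈ Aut(n), then cD ∈ Der(n)_rn and hDh⁻¹ ∈ Der(n)_rn. -/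
open Finset

noncomputable section

variable {V : Type*} [AddCommGroup V] [Module ℝ V] {ι : Type*} [Fintype ι] [DecidableEq ι]

/-- The inner product on `V` making the basis `b` orthonormal. -/
def bip (b : Module.Basis ι ℝ V) (x y : V) : ℝ := ∑ i, b.repr x i * b.repr y i

/-- The element `H` with `⟨H, X⟩ = tr (ad_μ X)` for the inner product of `b`. -/
def ricH (b : Module.Basis ι ℝ V) (μ : V →ₗ[ℝ] V →ₗ[ℝ] V) : V :=
  ∑ i, (LinearMap.trace ℝ V (μ (b i))) • b i

/-- The Ricci curvature form of the metric Lie algebra `(V, μ, bip b)`. -/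
def ricciForm (b : Module.Basis ι ℝ V) (μ : V →ₗ[ℝ] V →ₗ[ℝ] V) (X Y : V) : ℝ :=
  -(1/2) * ∑ i, ∑ j, bip b (μ X (b i)) (b j) * bip b (μ Y (b i)) (b j)
  + (1/4) * ∑ i, ∑ j, bip b (μ (b i) (b j)) X * bip b (μ (b i) (b j)) Y
  - (1/2) * (LinearMap.trace ℝ V ((μ X) ∘ₗ (μ Y)))
  - (1/2) * (bip b (μ (ricH b μ) X) Y + bip b (μ (ricH b μ) Y) X)

/-- The Ricci operator of `(V, μ, bip b)` is negative definite. -/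
def RicciNegDef (b : Module.Basis ι ℝ V) (μ : V →ₗ[ℝ] V →ₗ[ℝ] V) : Prop :=
  ∀ X : V, X ≠ 0 → ricciForm b μ X X < 0

/-- The bracket of the solvable extension `s_D = ℝ f ⊕ n`. -/
def sBr (μ : V →ₗ[ℝ] V →ₗ[ℝ] V) (D : V →ₗ[ℝ] V) :
    (ℝ × V) →ₗ[ℝ] (ℝ × V) →ₗ[ℝ] (ℝ × V) :=
  (((LinearMap.lsmul ℝ V).compl₁₂ (LinearMap.fst ℝ ℝ V) (D ∘ₗ LinearMap.snd ℝ ℝ V))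
    - ((LinearMap.lsmul ℝ V).compl₁₂ (LinearMap.fst ℝ ℝ V) (D ∘ₗ LinearMap.snd ℝ ℝ V)).flip
    + μ.compl₁₂ (LinearMap.snd ℝ ℝ V) (LinearMap.snd ℝ ℝ V)).compr₂ (LinearMap.inr ℝ ℝ V)

/-- Nilpotency of the bracket `μ`. -/
def IsNilpotentBr (μ : V →ₗ[ℝ] V →ₗ[ℝ] V) : Prop :=
  ∃ N : ℕ, ∀ (f : Fin N → V) (y : V), (List.ofFn f).foldr (fun x a => μ x a) y = 0

/-- `μ` is a Lie bracket on `V`. -/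
def IsLieBr (μ : V →ₗ[ℝ] V →ₗ[ℝ] V) : Prop :=
  (∀ x, μ x x = 0) ∧ ∀ x y z, μ x (μ y z) + μ y (μ z x) + μ z (μ x y) = 0

variable (m : ℕ) (lam : (Fin m → ℝ) →ₗ[ℝ] (Fin m → ℝ) →ₗ[ℝ] (Fin m → ℝ))

/-- The set `Der(n)` of derivations of `n = (ℝ^m, lam)`, as matrices. -/
def derSet : Set (Matrix (Fin m) (Fin m) ℝ) :=
  {D | ∀ x y, D.mulVec (lam x y) = lam (D.mulVec x) y + lam x (D.mulVec y)}

/-- The set `Der(n)_rn` of Ricci negative derivations of `n`: derivations `D` with `tr D > 0`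
such that `s_D` admits an inner product of negative Ricci curvature. -/
def rnSet : Set (Matrix (Fin m) (Fin m) ℝ) :=
  {D | D ∈ derSet m lam ∧ 0 < D.trace ∧
    ∃ b : Module.Basis (Unit ⊕ Fin m) ℝ (ℝ × (Fin m → ℝ)),
      RicciNegDef b (sBr lam D.mulVecLin)}

/-! ### Auxiliary lemmas -/

lemma sBr_apply_s3 (μ : V →ₗ[ℝ] V →ₗ[ℝ] V) (D : V →ₗ[ℝ] V) (u v : ℝ × V) :
    sBr μ D u v = (0, u.1 • D v.2 - v.1 • D u.2 + μ u.2 v.2) := rfl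

lemma bip_smul_left (b : Module.Basis ι ℝ V) (c : ℝ) (u v : V) :
    bip b (c • u) v = c * bip b u v := by
  simp [bip, Finset.mul_sum, mul_assoc]

lemma bip_smul_right (b : Module.Basis ι ℝ V) (c : ℝ) (u v : V) :
    bip b u (c • v) = c * bip b u v := by
  simp only [bip, map_smul, Finsupp.smul_apply, smul_eq_mul, Finset.mul_sum]
  exact Finset.sum_congr rfl fun i _ => by ring

lemma bip_map (b : Module.Basis ι ℝ V) (φ : V ≃ₗ[ℝ] V) (x y : V) :
    bip (b.map φ.symm) x y = bip b (φ x) (φ y) := by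
  simp [bip, Module.Basis.map_repr]

lemma trace_eq_sum (b : Module.Basis ι ℝ V) (f : V →ₗ[ℝ] V) :
    LinearMap.trace ℝ V f = ∑ i, b.repr (f (b i)) i := by
  rw [LinearMap.trace_eq_matrix_trace ℝ b f, Matrix.trace]
  simp [LinearMap.toMatrix_apply, Matrix.diag]

lemma ricciForm_transfer (b : Module.Basis ι ℝ V) (μ μ' : V →ₗ[ℝ] V →ₗ[ℝ] V) (φ : V ≃ₗ[ℝ] V)
    (hφ : ∀ x y, φ (μ' x y) = μ (φ x) (φ y)) (X Y : V) :
    ricciForm (b.map φ.symm) μ' X Y = ricciForm b μ (φ X) (φ Y) := by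
  have key : ∀ x, μ' x = φ.symm.conj (μ (φ x)) := by
    intro x; ext y
    apply φ.injective
    simp [LinearEquiv.conj_apply, hφ]
  have hμ'app : ∀ x y, μ' x y = φ.symm (μ (φ x) (φ y)) := by
    intro x y; rw [key]; simp [LinearEquiv.conj_apply]
  have hH : ricH (b.map φ.symm) μ' = φ.symm (ricH b μ) := by
    unfold ricH
    rw [map_sum]
    refine Finset.sum_congr rfl fun i _ => ?_
    rw [Module.Basis.map_apply, map_smul, key, LinearEquiv.apply_symm_apply,
      LinearMap.trace_conj']
  have hcomp : μ' X ∘ₗ μ' Y = φ.symm.conj (μ (φ X) ∘ₗ μ (φ Y)) := by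
    ext y
    simp [hμ'app, LinearEquiv.conj_apply, LinearEquiv.apply_symm_apply]
  unfold ricciForm
  rw [hH, hcomp, LinearMap.trace_conj']
  simp only [bip_map, Module.Basis.map_apply, hμ'app, LinearEquiv.apply_symm_apply]

lemma ricciNegDef_transfer (b : Module.Basis ι ℝ V) (μ μ' : V →ₗ[ℝ] V →ₗ[ℝ] V) (φ : V ≃ₗ[ℝ] V)
    (hφ : ∀ x y, φ (μ' x y) = μ (φ x) (φ y)) (h : RicciNegDef b μ) :
    RicciNegDef (b.map φ.symm) μ' := by
  intro X hX
  rw [ricciForm_transfer b μ μ' φ hφ]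
  exact h (φ X) (by simpa using hX)

lemma sum2_smul {γ : Type*} (s t : Finset γ) (f g : γ → γ → ℝ) (c : ℝ) :
    ∑ i ∈ s, ∑ j ∈ t, (c * f i j) * (c * g i j) = c^2 * ∑ i ∈ s, ∑ j ∈ t, f i j * g i j := by
  rw [Finset.mul_sum]
  refine Finset.sum_congr rfl fun i _ => ?_
  rw [Finset.mul_sum]
  exact Finset.sum_congr rfl fun j _ => by ring

lemma ricciForm_smul (b : Module.Basis ι ℝ V) (μ : V →ₗ[ℝ] V →ₗ[ℝ] V) (c : ℝ) (X : V) :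
    ricciForm b μ (c • X) (c • X) = c^2 * ricciForm b μ X X := by
  unfold ricciForm
  simp only [map_smul, LinearMap.smul_apply, bip_smul_left, bip_smul_right,
    LinearMap.comp_smul, LinearMap.smul_comp, smul_eq_mul]
  rw [sum2_smul, sum2_smul]
  ring

lemma contlam {α : Type*} [TopologicalSpace α] {x y : α → Fin m → ℝ}
    (hx : Continuous x) (hy : Continuous y) : Continuous fun a => lam (x a) (y a) := by
  have hrep : ∀ a, lam (x a) (y a)
      = ∑ i, ∑ j, (x a i * y a j) •
          lam ((Pi.basisFun ℝ (Fin m)) i) ((Pi.basisFun ℝ (Fin m)) j) := by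
    intro a
    conv_lhs => rw [← (Pi.basisFun ℝ (Fin m)).sum_repr (x a),
      ← (Pi.basisFun ℝ (Fin m)).sum_repr (y a)]
    simp only [map_sum, LinearMap.sum_apply, map_smul, LinearMap.smul_apply,
      Pi.basisFun_repr]
    simp only [Finset.smul_sum]
    rw [Finset.sum_comm]
    refine Finset.sum_congr rfl fun i _ => Finset.sum_congr rfl fun j _ => ?_
    rw [smul_smul, mul_comm]
  rw [show (fun a => lam (x a) (y a)) = _ from funext hrep]
  exact continuous_finset_sum _ fun i _ => continuous_finset_sum _ fun j _ =>
    (((continuous_apply i).comp hx).mul ((continuous_apply j).comp hy)).smul continuous_const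

lemma contCoord (b : Module.Basis (Unit ⊕ Fin m) ℝ (ℝ × (Fin m → ℝ))) (k : Unit ⊕ Fin m) :
    Continuous fun w : ℝ × (Fin m → ℝ) => (b.repr w) k := by
  have h := (b.coord k).continuous_of_finiteDimensional
  have he : (fun w : ℝ × (Fin m → ℝ) => (b.repr w) k) = ⇑(b.coord k) := by
    funext w; simp [Module.Basis.coord_apply]
  rw [he]; exact h

lemma contBip (b : Module.Basis (Unit ⊕ Fin m) ℝ (ℝ × (Fin m → ℝ))) {α : Type*} [TopologicalSpace α]
    {u v : α → ℝ × (Fin m → ℝ)} (hu : Continuous u) (hv : Continuous v) :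
    Continuous fun a => bip b (u a) (v a) := by
  unfold bip
  exact continuous_finset_sum _ fun k _ =>
    ((contCoord _ b k).comp hu).mul ((contCoord _ b k).comp hv)

lemma contBr {α : Type*} [TopologicalSpace α] {f : α → Matrix (Fin m) (Fin m) ℝ}
    {u v : α → ℝ × (Fin m → ℝ)} (hf : Continuous f) (hu : Continuous u) (hv : Continuous v) :
    Continuous fun a => sBr lam (f a).mulVecLin (u a) (v a) := by
  simp only [sBr_apply_s3, Matrix.mulVecLin_apply]
  exact continuous_const.prodMk
    (((hu.fst.smul (hf.matrix_mulVec hv.snd)).sub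
      (hv.fst.smul (hf.matrix_mulVec hu.snd))).add
      (contlam _ lam hu.snd hv.snd))

lemma contRicH (b : Module.Basis (Unit ⊕ Fin m) ℝ (ℝ × (Fin m → ℝ))) :
    Continuous fun D : Matrix (Fin m) (Fin m) ℝ => ricH b (sBr lam D.mulVecLin) := by
  unfold ricH
  refine continuous_finset_sum _ fun i _ => Continuous.fun_smul ?_ continuous_const
  have he : (fun D : Matrix (Fin m) (Fin m) ℝ =>
      LinearMap.trace ℝ _ (sBr lam D.mulVecLin (b i)))
      = fun D => ∑ j, b.repr (sBr lam D.mulVecLin (b i) (b j)) j :=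
    funext fun D => trace_eq_sum b _
  rw [he]
  exact continuous_finset_sum _ fun j _ =>
    (contCoord _ b j).comp (contBr _ lam continuous_id continuous_const continuous_const)

lemma contQ (b : Module.Basis (Unit ⊕ Fin m) ℝ (ℝ × (Fin m → ℝ))) :
    Continuous fun p : Matrix (Fin m) (Fin m) ℝ × (ℝ × (Fin m → ℝ)) =>
      ricciForm b (sBr lam p.1.mulVecLin) p.2 p.2 := by
  unfold ricciForm
  have hD : Continuous fun p : Matrix (Fin m) (Fin m) ℝ × (ℝ × (Fin m → ℝ)) => p.1 :=
    continuous_fst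
  have hX : Continuous fun p : Matrix (Fin m) (Fin m) ℝ × (ℝ × (Fin m → ℝ)) => p.2 :=
    continuous_snd
  refine Continuous.sub (Continuous.sub (Continuous.add ?_ ?_) ?_) ?_
  · exact continuous_const.mul (continuous_finset_sum _ fun i _ =>
      continuous_finset_sum _ fun j _ =>
      (contBip _ b (contBr _ lam hD hX continuous_const) continuous_const).mul
      (contBip _ b (contBr _ lam hD hX continuous_const) continuous_const))
  · exact continuous_const.mul (continuous_finset_sum _ fun i _ =>
      continuous_finset_sum _ fun j _ =>
      (contBip _ b (contBr _ lam hD continuous_const continuous_const) hX).mul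
      (contBip _ b (contBr _ lam hD continuous_const continuous_const) hX))
  · refine continuous_const.mul ?_
    have he : (fun p : Matrix (Fin m) (Fin m) ℝ × (ℝ × (Fin m → ℝ)) =>
        LinearMap.trace ℝ _ ((sBr lam p.1.mulVecLin p.2) ∘ₗ (sBr lam p.1.mulVecLin p.2)))
        = fun p => ∑ i,
            b.repr (sBr lam p.1.mulVecLin p.2 (sBr lam p.1.mulVecLin p.2 (b i))) i := by
      funext p; rw [trace_eq_sum b]; simp only [LinearMap.comp_apply]
    rw [he]
    exact continuous_finset_sum _ fun i _ => (contCoord _ b i).comp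
      (contBr _ lam hD hX (contBr _ lam hD hX continuous_const))
  · exact continuous_const.mul
      ((contBip _ b (contBr _ lam hD ((contRicH _ lam b).comp hD) hX) hX).add
       (contBip _ b (contBr _ lam hD ((contRicH _ lam b).comp hD) hX) hX))

set_option maxHeartbeats 1000000 in
lemma rn_isOpen :
    IsOpen {D : Matrix (Fin m) (Fin m) ℝ | 0 < D.trace ∧
      ∃ b : Module.Basis (Unit ⊕ Fin m) ℝ (ℝ × (Fin m → ℝ)),
        RicciNegDef b (sBr lam D.mulVecLin)} := by
  rw [isOpen_iff_mem_nhds]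
  rintro D₀ ⟨htr, b, hb⟩
  have htrC : Continuous fun D : Matrix (Fin m) (Fin m) ℝ => D.trace := by
    simp only [Matrix.trace, Matrix.diag]
    exact continuous_finset_sum _ fun i _ =>
      (continuous_apply i).comp (continuous_apply i)
  have hQ := contQ m lam b
  have hsub : ({D₀} : Set (Matrix (Fin m) (Fin m) ℝ)) ×ˢ
      (Metric.sphere (0 : ℝ × (Fin m → ℝ)) 1) ⊆
      {p : Matrix (Fin m) (Fin m) ℝ × (ℝ × (Fin m → ℝ)) |
        ricciForm b (sBr lam p.1.mulVecLin) p.2 p.2 < 0} := by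
    rintro ⟨D, X⟩ ⟨hD, hXS⟩
    simp only [Set.mem_singleton_iff] at hD
    subst hD
    have hX0 : X ≠ 0 := by
      intro h0
      rw [mem_sphere_zero_iff_norm, h0, norm_zero] at hXS
      norm_num at hXS
    exact hb X hX0
  obtain ⟨U1, U2, hU1o, _, hDU1, hSU2, hsub'⟩ :=
    generalized_tube_lemma isCompact_singleton
      (isCompact_sphere (0 : ℝ × (Fin m → ℝ)) 1)
      (isOpen_lt hQ continuous_const) hsub
  have hmem : U1 ∩ (fun D : Matrix (Fin m) (Fin m) ℝ => D.trace) ⁻¹' Set.Ioi 0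
      ∈ nhds D₀ := by
    refine Filter.inter_mem (hU1o.mem_nhds (hDU1 rfl)) ?_
    exact htrC.continuousAt.preimage_mem_nhds (isOpen_Ioi.mem_nhds htr)
  refine Filter.mem_of_superset hmem ?_
  rintro D ⟨hDU, hDtr⟩
  refine ⟨hDtr, b, ?_⟩
  intro X hX
  have hnX : ‖X‖ ≠ 0 := norm_ne_zero_iff.mpr hX
  have hu : (‖X‖⁻¹ • X) ∈ Metric.sphere (0 : ℝ × (Fin m → ℝ)) 1 := by
    rw [mem_sphere_zero_iff_norm, norm_smul, norm_inv, norm_norm]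
    field_simp
  have hQu : ricciForm b (sBr lam D.mulVecLin) (‖X‖⁻¹ • X) (‖X‖⁻¹ • X) < 0 := by
    have h2 := hsub' (Set.mk_mem_prod hDU (hSU2 hu))
    simpa only [Set.mem_setOf_eq] using h2
  have hXu : X = ‖X‖ • (‖X‖⁻¹ • X) := (smul_inv_smul₀ hnX X).symm
  calc ricciForm b (sBr lam D.mulVecLin) X X
      = ‖X‖^2 * ricciForm b (sBr lam D.mulVecLin) (‖X‖⁻¹ • X) (‖X‖⁻¹ • X) := by
        conv_lhs => rw [hXu]
        exact ricciForm_smul b _ _ _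
    _ < 0 := mul_neg_of_pos_of_neg (pow_pos (norm_pos_iff.mpr hX) 2) hQu

lemma rn_cone (D : Matrix (Fin m) (Fin m) ℝ) (hD : D ∈ rnSet m lam) (c : ℝ) (hc : 0 < c) :
    c • D ∈ rnSet m lam := by
  obtain ⟨hder, htr, b, hb⟩ := hD
  refine ⟨?_, ?_, ?_⟩
  · intro x y
    simp only [Matrix.smul_mulVec, hder x y, map_smul, smul_add, LinearMap.smul_apply]
  · rw [Matrix.trace_smul, smul_eq_mul]
    exact mul_pos hc htr
  · set φ : (ℝ × (Fin m → ℝ)) ≃ₗ[ℝ] (ℝ × (Fin m → ℝ)) :=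
      (LinearEquiv.smulOfNeZero ℝ ℝ c hc.ne').prodCongr (LinearEquiv.refl ℝ (Fin m → ℝ))
      with hφdef
    refine ⟨b.map φ.symm, ricciNegDef_transfer b _ _ φ ?_ hb⟩
    intro u v
    apply Prod.ext
    · simp [hφdef, sBr_apply_s3]
    · simp only [hφdef, sBr_apply_s3, Matrix.mulVecLin_apply, LinearEquiv.prodCongr_apply,
        LinearEquiv.refl_apply, LinearEquiv.smulOfNeZero_apply,
        Matrix.smul_mulVec, smul_smul, smul_eq_mul, Units.smul_def,
        Units.val_mk0]
      module

lemma rn_conj (h : (Matrix (Fin m) (Fin m) ℝ)ˣ)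
    (hAut : ∀ x y, (↑h : Matrix (Fin m) (Fin m) ℝ).mulVec (lam x y) =
      lam ((↑h : Matrix (Fin m) (Fin m) ℝ).mulVec x) ((↑h : Matrix (Fin m) (Fin m) ℝ).mulVec y))
    (D : Matrix (Fin m) (Fin m) ℝ) (hD : D ∈ rnSet m lam) :
    (↑h : Matrix (Fin m) (Fin m) ℝ) * D * (↑h⁻¹ : Matrix (Fin m) (Fin m) ℝ) ∈ rnSet m lam := by
  obtain ⟨hder, htr, b, hb⟩ := hD
  set A : Matrix (Fin m) (Fin m) ℝ := ↑h with hA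
  set A' : Matrix (Fin m) (Fin m) ℝ := ↑h⁻¹ with hA'
  have hAA' : A * A' = 1 := by rw [hA, hA', ← Units.val_mul, mul_inv_cancel, Units.val_one]
  have hA'A : A' * A = 1 := by rw [hA, hA', ← Units.val_mul, inv_mul_cancel, Units.val_one]
  have hinv : ∀ x, A.mulVec (A'.mulVec x) = x := fun x => by
    rw [Matrix.mulVec_mulVec, hAA', Matrix.one_mulVec]
  have hinv' : ∀ x, A'.mulVec (A.mulVec x) = x := fun x => by
    rw [Matrix.mulVec_mulVec, hA'A, Matrix.one_mulVec]
  have hAutInv : ∀ x y, A'.mulVec (lam x y) = lam (A'.mulVec x) (A'.mulVec y) := by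
    intro x y
    have h2 := hAut (A'.mulVec x) (A'.mulVec y)
    rw [hinv, hinv] at h2
    rw [← h2, hinv']
  have hcm : ∀ z, (A * D * A').mulVec z = A.mulVec (D.mulVec (A'.mulVec z)) := fun z => by
    rw [Matrix.mulVec_mulVec, Matrix.mulVec_mulVec]
  have hAconj : ∀ x, A'.mulVec ((A * D * A').mulVec x) = D.mulVec (A'.mulVec x) :=
    fun x => by rw [hcm, hinv']
  have hder' : ∀ x y, D.mulVec (lam x y) = lam (D.mulVec x) y + lam x (D.mulVec y) := hder
  refine ⟨?_, ?_, ?_⟩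
  · intro x y
    simp only [hcm, hAutInv, hder', Matrix.mulVec_add, hAut, hinv]
  · have htreq : (A * D * A').trace = D.trace := by
      rw [Matrix.trace_mul_cycle, hA'A, Matrix.one_mul]
    rw [htreq]; exact htr
  · set e : (Fin m → ℝ) ≃ₗ[ℝ] (Fin m → ℝ) :=
      LinearEquiv.ofLinear A'.mulVecLin A.mulVecLin
        (by rw [← Matrix.mulVecLin_mul, hA'A, Matrix.mulVecLin_one])
        (by rw [← Matrix.mulVecLin_mul, hAA', Matrix.mulVecLin_one]) with hedef
    set ψ : (ℝ × (Fin m → ℝ)) ≃ₗ[ℝ] (ℝ × (Fin m → ℝ)) :=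
      (LinearEquiv.refl ℝ ℝ).prodCongr e with hψdef
    refine ⟨b.map ψ.symm, ricciNegDef_transfer b _ _ ψ ?_ hb⟩
    intro u v
    apply Prod.ext
    · simp [hψdef, sBr_apply_s3]
    · simp only [hψdef, hedef, sBr_apply_s3, Matrix.mulVecLin_apply, LinearEquiv.prodCongr_apply,
        LinearEquiv.refl_apply, LinearEquiv.ofLinear_apply,
        Matrix.mulVec_add, Matrix.mulVec_sub, Matrix.mulVec_smul, hAconj, hAutInv]

/-- `Der(n)_rn` is an open cone in `Der(n)`, invariant under `Aut(n)`-conjugation. -/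
theorem rnSet_open_cone_aut_invariant
    (hlie : IsLieBr lam) (hnilp : IsNilpotentBr lam) :
    (∃ U : Set (Matrix (Fin m) (Fin m) ℝ), IsOpen U ∧ rnSet m lam = U ∩ derSet m lam) ∧
    (∀ D ∈ rnSet m lam, ∀ c : ℝ, 0 < c → c • D ∈ rnSet m lam) ∧
    (∀ h : (Matrix (Fin m) (Fin m) ℝ)ˣ,
      (∀ x y, (↑h : Matrix (Fin m) (Fin m) ℝ).mulVec (lam x y) =
        lam ((↑h : Matrix (Fin m) (Fin m) ℝ).mulVec x) ((↑h : Matrix (Fin m) (Fin m) ℝ).mulVec y)) →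
      ∀ D ∈ rnSet m lam,
        (↑h : Matrix (Fin m) (Fin m) ℝ) * D * (↑h⁻¹ : Matrix (Fin m) (Fin m) ℝ) ∈ rnSet m lam) := by
  refine ⟨⟨{D : Matrix (Fin m) (Fin m) ℝ | 0 < D.trace ∧
      ∃ b : Module.Basis (Unit ⊕ Fin m) ℝ (ℝ × (Fin m → ℝ)),
        RicciNegDef b (sBr lam D.mulVecLin)}, rn_isOpen m lam, ?_⟩,
    fun D hD c hc => rn_cone m lam D hD c hc,
    fun h hAut D hD => rn_conj m lam h hAut D hD⟩
  ext D
  simp only [rnSet, Set.mem_setOf_eq, Set.mem_inter_iff, derSet]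
  tauto

end
end

section
/- Let n be a finite-dimensional nilpotent real Lie algebra and assume that n = n₀ ⊕ n₁ as vector spaces, where n₀ is a Lie subalgebra of n, n₁ is an ideal of n, and the center z(n) of n is contained in n₁. Then for any nonzero X₀ ∈ n₀ there exists X₁ ∈ n₁ such that [X₀, X₁] ≠ 0. -/
/-- Let `n` be a finite-dimensional nilpotent real Lie algebra with `n = n₀ ⊕ n₁` as vector
spaces, where `n₀` is a subalgebra, `n₁` is an ideal and the center of `n` is contained in `n₁`.
Then every nonzero `X₀ ∈ n₀` has a nonzero bracket with some `X₁ ∈ n₁`. -/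
theorem exists_nonzero_bracket_of_decomposition
    {n : Type*} [LieRing n] [LieAlgebra ℝ n] [FiniteDimensional ℝ n]
    [LieRing.IsNilpotent n]
    (n₀ n₁ : Submodule ℝ n)
    (hsub : ∀ x ∈ n₀, ∀ y ∈ n₀, ⁅x, y⁆ ∈ n₀)
    (hideal : ∀ x : n, ∀ y ∈ n₁, ⁅x, y⁆ ∈ n₁)
    (hsup : n₀ ⊔ n₁ = ⊤) (hinf : n₀ ⊓ n₁ = ⊥)
    (hcenter : ∀ z : n, (∀ x : n, ⁅z, x⁆ = 0) → z ∈ n₁) :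
    ∀ X₀ ∈ n₀, X₀ ≠ 0 → ∃ X₁ ∈ n₁, ⁅X₀, X₁⁆ ≠ 0 := by
  intro X₀ hX₀ hne
  by_contra h
  push_neg at h
  -- h : ∀ X₁ ∈ n₁, ⁅X₀, X₁⁆ = 0
  -- D : elements of n₀ that centralize n₁
  set D : n → Prop := fun z => z ∈ n₀ ∧ ∀ y ∈ n₁, ⁅z, y⁆ = 0 with hD
  have hDX₀ : D X₀ := ⟨hX₀, h⟩
  -- D is invariant under bracketing with n₀
  have hDinv : ∀ x ∈ n₀, ∀ z, D z → D ⁅x, z⁆ := by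
    intro x hx z hz
    refine ⟨hsub x hx z hz.1, fun y hy => ?_⟩
    rw [lie_lie, hz.2 y hy, lie_zero, zero_sub, hz.2 _ (hideal x y hy), neg_zero]
  -- descent along the lower central series
  have key : ∀ k : ℕ, (∃ Z, Z ≠ 0 ∧ D Z ∧ ∀ x ∈ n₀, ⁅x, Z⁆ = 0) ∨
      (∃ Z, Z ≠ 0 ∧ D Z ∧ Z ∈ LieModule.lowerCentralSeries ℝ n n k) := by
    intro k
    induction k with
    | zero => exact Or.inr ⟨X₀, hne, hDX₀, LieSubmodule.mem_top X₀⟩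
    | succ k ih =>
      rcases ih with hl | ⟨Z, hZne, hZD, hZk⟩
      · exact Or.inl hl
      by_cases hz : ∀ x ∈ n₀, ⁅x, Z⁆ = 0
      · exact Or.inl ⟨Z, hZne, hZD, hz⟩
      push_neg at hz
      obtain ⟨x, hx, hxZ⟩ := hz
      refine Or.inr ⟨⁅x, Z⁆, hxZ, hDinv x hx Z hZD, ?_⟩
      rw [LieModule.lowerCentralSeries_succ]
      exact LieSubmodule.lie_mem_lie (LieSubmodule.mem_top x) hZk
  obtain ⟨k, hk⟩ := (LieModule.isNilpotent_iff ℝ n n).mp inferInstance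
  rcases key k with ⟨Z, hZne, hZD, hZc⟩ | ⟨Z, hZne, _, hZk⟩
  · -- Z is central
    have hZcen : ∀ x : n, ⁅Z, x⁆ = 0 := by
      intro x
      have hxmem : x ∈ n₀ ⊔ n₁ := by rw [hsup]; exact Submodule.mem_top
      obtain ⟨a, ha, b, hb, rfl⟩ := Submodule.mem_sup.mp hxmem
      rw [lie_add, hZD.2 b hb, add_zero, ← lie_skew, hZc a ha, neg_zero]
    have hZ1 : Z ∈ n₁ := hcenter Z hZcen
    have : Z ∈ n₀ ⊓ n₁ := ⟨hZD.1, hZ1⟩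
    rw [hinf] at this
    exact hZne this
  · rw [hk] at hZk
    exact hZne hZk
end

section
/- Let λ be the nilpotent Lie bracket on ℝ⁵ defined by λ(e₁,e₂) = e₃ + e₄, λ(e₁,e₃) = e₅, λ(e₁,e₄) = e₅ (all other brackets of basis vectors zero), and let G ⊆ GL₅(ℝ) be the group of matrices of block-diagonal form diag(h₁, h₂, H, h₅) with h₁, h₂, h₅ > 0 and H ∈ GL₂(ℝ) of positive determinant (acting on the middle coordinates e₃, e₄). Then {m(μ) : μ a nonzero element of the closure of G·λ and m(μ) diagonal} = {a·F₁₂³ + b·F₁₂⁴ + c·F₁₃⁵ + d·F₁₄⁵ : a,b,c,d ≥ 0, a+b+c+d = 1, ab = cd}. -/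
open Finset Matrix

noncomputable section

section RicciToolkit

variable {V : Type*} [AddCommGroup V] [Module ℝ V] {ι : Type*} [Fintype ι] [DecidableEq ι]

lemma sBr_apply (μ : V →ₗ[ℝ] V →ₗ[ℝ] V) (D : V →ₗ[ℝ] V) (p q : ℝ × V) :
    sBr μ D p q = (0, p.1 • D q.2 - q.1 • D p.2 + μ p.2 q.2) := by
  simp [sBr, Prod.ext_iff]

end RicciToolkit

variable {m : ℕ}

/-- The bilinear bracket on `ℝ^m` with structure constants `c`. -/
def br (c : Fin m → Fin m → Fin m → ℝ) (x y : Fin m → ℝ) : Fin m → ℝ :=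
  fun k => ∑ i, ∑ j, x i * y j * c i j k

/-- The bracket `br c` as a bundled bilinear map. -/
def brL (c : Fin m → Fin m → Fin m → ℝ) :
    (Fin m → ℝ) →ₗ[ℝ] (Fin m → ℝ) →ₗ[ℝ] (Fin m → ℝ) :=
  LinearMap.mk₂ ℝ (br c)
    (fun x x' y => by
      funext k
      simp only [br, Pi.add_apply, add_mul, Finset.sum_add_distrib])
    (fun a x y => by
      funext k
      simp only [br, Pi.smul_apply, smul_eq_mul, Finset.mul_sum]
      exact Finset.sum_congr rfl fun i _ => Finset.sum_congr rfl fun j _ => by ring)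
    (fun x y y' => by
      funext k
      simp only [br, Pi.add_apply, mul_add, add_mul, Finset.sum_add_distrib])
    (fun a x y => by
      funext k
      simp only [br, Pi.smul_apply, smul_eq_mul, Finset.mul_sum]
      exact Finset.sum_congr rfl fun i _ => Finset.sum_congr rfl fun j _ => by ring)

/-- Action of an invertible matrix `g` on brackets: `(g·μ)(x,y) = g μ(g⁻¹x, g⁻¹y)`. -/
def actGL (g : (Matrix (Fin m) (Fin m) ℝ)ˣ) (c : Fin m → Fin m → Fin m → ℝ) :
    Fin m → Fin m → Fin m → ℝ :=
  fun i j k => ∑ p, ∑ q, ∑ l, ((↑g⁻¹ : Matrix (Fin m) (Fin m) ℝ) p i) *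
    ((↑g⁻¹ : Matrix (Fin m) (Fin m) ℝ) q j) * ((↑g : Matrix (Fin m) (Fin m) ℝ) k l) * c p q l

/-- Action of the positive diagonal matrix `diagonal d` on brackets. -/
def actDiag (d : Fin m → ℝ) (c : Fin m → Fin m → Fin m → ℝ) :
    Fin m → Fin m → Fin m → ℝ :=
  fun i j k => (d k / (d i * d j)) * c i j k

/-- The canonical inner product on `Λ²(ℝ^m)^* ⊗ ℝ^m`, in structure-constant coordinates
(the weight vectors `μ_ijk`, `i < j`, form an orthonormal basis). -/
def bip3 (c d : Fin m → Fin m → Fin m → ℝ) : ℝ :=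
  (1/2) * ∑ i, ∑ j, ∑ k, c i j k * d i j k

/-- The `gl`-action of a matrix `E` on a bracket `c`:
`(E·μ)(x,y) = E μ(x,y) − μ(Ex,y) − μ(x,Ey)`. -/
def actE (E : Matrix (Fin m) (Fin m) ℝ) (c : Fin m → Fin m → Fin m → ℝ) :
    Fin m → Fin m → Fin m → ℝ :=
  fun i j k => (∑ l, E k l * c i j l) - (∑ l, E l i * c l j k) - (∑ l, E l j * c i l k)

/-- The moment map: `mm c` is the symmetric matrix satisfying
`⟨mm c, E⟩ = ⟨E·c, c⟩ / |c|²` for every symmetric matrix `E`. -/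
def mm (c : Fin m → Fin m → Fin m → ℝ) : Matrix (Fin m) (Fin m) ℝ :=
  Matrix.of fun a b => (1 / (2 * bip3 c c)) *
    bip3 (actE (Matrix.single a b 1 + Matrix.single b a 1) c) c

/-- The diagonal matrix `F_ij^k = E_kk - E_ii - E_jj`. -/
def Fmat (i j k : Fin m) : Matrix (Fin m) (Fin m) ℝ :=
  Matrix.single k k 1 - Matrix.single i i 1 - Matrix.single j j 1

/-- `D` (as a matrix) is a derivation of the bracket `c`. -/
def IsDerivM (c : Fin m → Fin m → Fin m → ℝ) (D : Matrix (Fin m) (Fin m) ℝ) : Prop :=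
  ∀ x y, D.mulVec (br c x y) = br c (D.mulVec x) y + br c x (D.mulVec y)

/-- Nilpotency of the bracket `br c`. -/
def IsNilpotentArr (c : Fin m → Fin m → Fin m → ℝ) : Prop :=
  ∃ N : ℕ, ∀ (f : Fin N → (Fin m → ℝ)) (y : Fin m → ℝ),
    (List.ofFn f).foldr (fun x a => br c x a) y = 0

/-- `c` are the structure constants of a Lie bracket. -/
def IsLieArr (c : Fin m → Fin m → Fin m → ℝ) : Prop :=
  (∀ i j k, c j i k = - c i j k) ∧
    ∀ x y z, br c x (br c y z) + br c y (br c z x) + br c z (br c x y) = 0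

/-- The canonical basis `{f} ∪ {e_i}` of `s_D = ℝ f ⊕ ℝ^m`. -/
def sBasis (m : ℕ) : Module.Basis (Unit ⊕ Fin m) ℝ (ℝ × (Fin m → ℝ)) :=
  (Module.Basis.singleton Unit ℝ).prod (Pi.basisFun ℝ (Fin m))

/-- A derivation `D` of `n = (ℝ^m, c)` with `tr D > 0` is *strongly Ricci negative* if the
solvable extension `s_D = ℝ f ⊕ n` admits an inner product of negative Ricci curvature such
that `f ⊥ n` and `D` is symmetric with respect to its restriction to `n`. -/
def StronglyRicciNegative (c : Fin m → Fin m → Fin m → ℝ)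
    (D : Matrix (Fin m) (Fin m) ℝ) : Prop :=
  0 < D.trace ∧
  ∃ b : Module.Basis (Unit ⊕ Fin m) ℝ (ℝ × (Fin m → ℝ)),
    (∀ x : Fin m → ℝ, bip b ((1 : ℝ), (0 : Fin m → ℝ)) ((0 : ℝ), x) = 0) ∧
    (∀ x y : Fin m → ℝ,
      bip b ((0 : ℝ), D.mulVec x) ((0 : ℝ), y) = bip b ((0 : ℝ), x) ((0 : ℝ), D.mulVec y)) ∧
    RicciNegDef b (sBr (brL c) D.mulVecLin)

/-- The weight vector `μ_ijk = (e^i ∧ e^j) ⊗ e_k` in structure-constant coordinates. -/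
def wtArr (i j k : Fin 5) : Fin 5 → Fin 5 → Fin 5 → ℝ :=
  fun a b l => (if a = i ∧ b = j ∧ l = k then (1 : ℝ) else 0)
    - (if a = j ∧ b = i ∧ l = k then (1 : ℝ) else 0)

/-- The nilpotent Lie bracket on `ℝ⁵` with `[e₁,e₂] = e₃ + e₄`, `[e₁,e₃] = e₅`,
`[e₁,e₄] = e₅`. -/
def lam5 : Fin 5 → Fin 5 → Fin 5 → ℝ :=
  wtArr 0 1 2 + wtArr 0 1 3 + wtArr 0 2 4 + wtArr 0 3 4

/-- The subgroup `G = {diag(h₁, h₂, H, h₅) : h₁, h₂, h₅ > 0, H ∈ GL₂⁺(ℝ)} ⊆ GL₅(ℝ)`. -/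
def G17 : Set ((Matrix (Fin 5) (Fin 5) ℝ)ˣ) :=
  {g | (∀ i j : Fin 5,
      ¬ ((i = 0 ∧ j = 0) ∨ (i = 1 ∧ j = 1) ∨ (i = 4 ∧ j = 4) ∨
        ((i = 2 ∨ i = 3) ∧ (j = 2 ∨ j = 3))) →
      (↑g : Matrix (Fin 5) (Fin 5) ℝ) i j = 0) ∧
    0 < (↑g : Matrix (Fin 5) (Fin 5) ℝ) 0 0 ∧
    0 < (↑g : Matrix (Fin 5) (Fin 5) ℝ) 1 1 ∧
    0 < (↑g : Matrix (Fin 5) (Fin 5) ℝ) 4 4 ∧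
    0 < ((↑g : Matrix (Fin 5) (Fin 5) ℝ) 2 2 * (↑g : Matrix (Fin 5) (Fin 5) ℝ) 3 3
      - (↑g : Matrix (Fin 5) (Fin 5) ℝ) 2 3 * (↑g : Matrix (Fin 5) (Fin 5) ℝ) 3 2)}

/-! ### Auxiliary machinery for `moment_image_example_dim5` -/

/-- The general element `x μ₀₁² + y μ₀₁³ + z μ₀₂⁴ + w μ₀₃⁴` of the 4-dimensional
subspace containing the orbit. -/
def comb5 (x y z w : ℝ) : Fin 5 → Fin 5 → Fin 5 → ℝ :=
  fun i j k => x * wtArr 0 1 2 i j k + y * wtArr 0 1 3 i j k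
    + z * wtArr 0 2 4 i j k + w * wtArr 0 3 4 i j k

lemma comb5_zero : comb5 0 0 0 0 = 0 := by
  funext i j k; simp [comb5]

lemma comb5_eval012 (x y z w : ℝ) : comb5 x y z w 0 1 2 = x := by
  simp (config := { decide := true }) [comb5, wtArr]
lemma comb5_eval013 (x y z w : ℝ) : comb5 x y z w 0 1 3 = y := by
  simp (config := { decide := true }) [comb5, wtArr]
lemma comb5_eval024 (x y z w : ℝ) : comb5 x y z w 0 2 4 = z := by
  simp (config := { decide := true }) [comb5, wtArr]
lemma comb5_eval034 (x y z w : ℝ) : comb5 x y z w 0 3 4 = w := by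
  simp (config := { decide := true }) [comb5, wtArr]

lemma bip3_comb5 (d : Fin 5 → Fin 5 → Fin 5 → ℝ) (x y z w : ℝ) :
    bip3 d (comb5 x y z w) =
      (x * (d 0 1 2 - d 1 0 2) + y * (d 0 1 3 - d 1 0 3)
        + z * (d 0 2 4 - d 2 0 4) + w * (d 0 3 4 - d 3 0 4)) / 2 := by
  simp (config := { decide := true }) only [bip3, comb5, wtArr, Fin.sum_univ_five,
    mul_ite, mul_one, mul_zero, ite_true, ite_false]
  norm_num
  ring

lemma bip3_comb5_self (x y z w : ℝ) :
    bip3 (comb5 x y z w) (comb5 x y z w) = x^2 + y^2 + z^2 + w^2 := by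
  rw [bip3_comb5]
  simp (config := { decide := true }) only [comb5, wtArr, ite_true, ite_false]
  norm_num
  ring

/-- The (unnormalized) values `⟨(E_ab+E_ba)·μ, μ⟩` for `μ = comb5 x y z w`. -/
def nMat5 (x y z w : ℝ) : Matrix (Fin 5) (Fin 5) ℝ :=
  !![-2*(x^2+y^2+z^2+w^2), 0, 0, 0, 0;
     0, -2*(x^2+y^2), 0, 0, 0;
     0, 0, 2*(x^2-z^2), 2*(x*y-z*w), 0;
     0, 0, 2*(x*y-z*w), 2*(y^2-w^2), 0;
     0, 0, 0, 0, 2*(z^2+w^2)]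

set_option maxHeartbeats 1000000 in
lemma bip3_actE_comb5 (x y z w : ℝ) (a b : Fin 5) :
    bip3 (actE (Matrix.single a b 1 + Matrix.single b a 1) (comb5 x y z w))
      (comb5 x y z w) = nMat5 x y z w a b := by
  fin_cases a <;> fin_cases b <;>
  · rw [bip3_comb5]
    simp (config := { decide := true }) only [actE, Fin.sum_univ_five, Matrix.add_apply,
      Matrix.single, Matrix.of_apply, comb5, wtArr, ite_true, ite_false]
    norm_num [nMat5]
    try ring

set_option maxHeartbeats 1000000 in
/-- The value of the moment map on `comb5 x y z w`. -/
lemma mm_comb5 (x y z w : ℝ) (hS : x^2 + y^2 + z^2 + w^2 ≠ 0) :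
    mm (comb5 x y z w) = Matrix.of (fun a b =>
      if a = 0 ∧ b = 0 then (-1 : ℝ)
      else if a = 1 ∧ b = 1 then -(x^2+y^2)/(x^2+y^2+z^2+w^2)
      else if a = 2 ∧ b = 2 then (x^2-z^2)/(x^2+y^2+z^2+w^2)
      else if a = 3 ∧ b = 3 then (y^2-w^2)/(x^2+y^2+z^2+w^2)
      else if a = 4 ∧ b = 4 then (z^2+w^2)/(x^2+y^2+z^2+w^2)
      else if (a = 2 ∧ b = 3) ∨ (a = 3 ∧ b = 2) then (x*y-z*w)/(x^2+y^2+z^2+w^2)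
      else 0) := by
  ext a b
  simp only [mm, Matrix.of_apply, bip3_actE_comb5, bip3_comb5_self]
  fin_cases a <;> fin_cases b <;>
  · simp (config := { decide := true }) only [nMat5, ite_true, ite_false,
      Matrix.cons_val', Matrix.cons_val_zero, Matrix.cons_val_one, Matrix.head_cons,
      Matrix.empty_val', Matrix.cons_val_fin_one, Matrix.head_fin_const, Matrix.of_apply]
    norm_num
    try field_simp
    try ring

/-- The key identity: the reduced formula for `actGL g lam5`. -/
lemma actGL_lam5 (g : (Matrix (Fin 5) (Fin 5) ℝ)ˣ) (i j k : Fin 5) :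
    actGL g lam5 i j k =
      ((↑g⁻¹ : Matrix (Fin 5) (Fin 5) ℝ) 0 i * (↑g⁻¹ : Matrix (Fin 5) (Fin 5) ℝ) 1 j
        - (↑g⁻¹ : Matrix (Fin 5) (Fin 5) ℝ) 1 i * (↑g⁻¹ : Matrix (Fin 5) (Fin 5) ℝ) 0 j)
        * ((↑g : Matrix (Fin 5) (Fin 5) ℝ) k 2 + (↑g : Matrix (Fin 5) (Fin 5) ℝ) k 3)
      + ((↑g⁻¹ : Matrix (Fin 5) (Fin 5) ℝ) 0 i * (↑g⁻¹ : Matrix (Fin 5) (Fin 5) ℝ) 2 j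
        - (↑g⁻¹ : Matrix (Fin 5) (Fin 5) ℝ) 2 i * (↑g⁻¹ : Matrix (Fin 5) (Fin 5) ℝ) 0 j
        + (↑g⁻¹ : Matrix (Fin 5) (Fin 5) ℝ) 0 i * (↑g⁻¹ : Matrix (Fin 5) (Fin 5) ℝ) 3 j
        - (↑g⁻¹ : Matrix (Fin 5) (Fin 5) ℝ) 3 i * (↑g⁻¹ : Matrix (Fin 5) (Fin 5) ℝ) 0 j)
        * (↑g : Matrix (Fin 5) (Fin 5) ℝ) k 4 := by
  simp (config := { decide := true }) only [actGL, lam5, wtArr, Pi.add_apply,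
    Fin.sum_univ_five, ite_true, ite_false]
  norm_num
  ring

/-! ### The orbit lies in a 4-dimensional subspace -/

set_option maxHeartbeats 4000000 in
lemma orbit_V5 (g : (Matrix (Fin 5) (Fin 5) ℝ)ˣ) (hg : g ∈ G17) :
    actGL g lam5 = comb5 (actGL g lam5 0 1 2) (actGL g lam5 0 1 3)
      (actGL g lam5 0 2 4) (actGL g lam5 0 3 4) := by
  obtain ⟨hz, h0, h1, h4, hd⟩ := hg
  have hmul : (↑g : Matrix (Fin 5) (Fin 5) ℝ) * (↑g⁻¹ : Matrix (Fin 5) (Fin 5) ℝ) = 1 := by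
    rw [← Units.val_mul, mul_inv_cancel, Units.val_one]
  have hme : ∀ a b : Fin 5, ∑ l, (↑g : Matrix (Fin 5) (Fin 5) ℝ) a l
      * (↑g⁻¹ : Matrix (Fin 5) (Fin 5) ℝ) l b = (1 : Matrix (Fin 5) (Fin 5) ℝ) a b := by
    intro a b; rw [← Matrix.mul_apply, hmul]
  have z01 : (↑g : Matrix (Fin 5) (Fin 5) ℝ) 0 1 = 0 := hz 0 1 (by decide)
  have z02 : (↑g : Matrix (Fin 5) (Fin 5) ℝ) 0 2 = 0 := hz 0 2 (by decide)
  have z03 : (↑g : Matrix (Fin 5) (Fin 5) ℝ) 0 3 = 0 := hz 0 3 (by decide)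
  have z04 : (↑g : Matrix (Fin 5) (Fin 5) ℝ) 0 4 = 0 := hz 0 4 (by decide)
  have z10 : (↑g : Matrix (Fin 5) (Fin 5) ℝ) 1 0 = 0 := hz 1 0 (by decide)
  have z12 : (↑g : Matrix (Fin 5) (Fin 5) ℝ) 1 2 = 0 := hz 1 2 (by decide)
  have z13 : (↑g : Matrix (Fin 5) (Fin 5) ℝ) 1 3 = 0 := hz 1 3 (by decide)
  have z14 : (↑g : Matrix (Fin 5) (Fin 5) ℝ) 1 4 = 0 := hz 1 4 (by decide)
  have z20 : (↑g : Matrix (Fin 5) (Fin 5) ℝ) 2 0 = 0 := hz 2 0 (by decide)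
  have z21 : (↑g : Matrix (Fin 5) (Fin 5) ℝ) 2 1 = 0 := hz 2 1 (by decide)
  have z24 : (↑g : Matrix (Fin 5) (Fin 5) ℝ) 2 4 = 0 := hz 2 4 (by decide)
  have z30 : (↑g : Matrix (Fin 5) (Fin 5) ℝ) 3 0 = 0 := hz 3 0 (by decide)
  have z31 : (↑g : Matrix (Fin 5) (Fin 5) ℝ) 3 1 = 0 := hz 3 1 (by decide)
  have z34 : (↑g : Matrix (Fin 5) (Fin 5) ℝ) 3 4 = 0 := hz 3 4 (by decide)
  have z40 : (↑g : Matrix (Fin 5) (Fin 5) ℝ) 4 0 = 0 := hz 4 0 (by decide)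
  have z41 : (↑g : Matrix (Fin 5) (Fin 5) ℝ) 4 1 = 0 := hz 4 1 (by decide)
  have z42 : (↑g : Matrix (Fin 5) (Fin 5) ℝ) 4 2 = 0 := hz 4 2 (by decide)
  have z43 : (↑g : Matrix (Fin 5) (Fin 5) ℝ) 4 3 = 0 := hz 4 3 (by decide)
  have r0 : ∀ b, (↑g : Matrix (Fin 5) (Fin 5) ℝ) 0 0 * (↑g⁻¹ : Matrix (Fin 5) (Fin 5) ℝ) 0 b
      = (1 : Matrix (Fin 5) (Fin 5) ℝ) 0 b := by
    intro b; have := hme 0 b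
    rw [Fin.sum_univ_five] at this
    rw [z01, z02, z03, z04] at this; linarith [this]
  have r1 : ∀ b, (↑g : Matrix (Fin 5) (Fin 5) ℝ) 1 1 * (↑g⁻¹ : Matrix (Fin 5) (Fin 5) ℝ) 1 b
      = (1 : Matrix (Fin 5) (Fin 5) ℝ) 1 b := by
    intro b; have := hme 1 b
    rw [Fin.sum_univ_five] at this
    rw [z10, z12, z13, z14] at this; linarith [this]
  have r2 : ∀ b, (↑g : Matrix (Fin 5) (Fin 5) ℝ) 2 2 * (↑g⁻¹ : Matrix (Fin 5) (Fin 5) ℝ) 2 b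
      + (↑g : Matrix (Fin 5) (Fin 5) ℝ) 2 3 * (↑g⁻¹ : Matrix (Fin 5) (Fin 5) ℝ) 3 b
      = (1 : Matrix (Fin 5) (Fin 5) ℝ) 2 b := by
    intro b; have := hme 2 b
    rw [Fin.sum_univ_five] at this
    rw [z20, z21, z24] at this; linarith [this]
  have r3 : ∀ b, (↑g : Matrix (Fin 5) (Fin 5) ℝ) 3 2 * (↑g⁻¹ : Matrix (Fin 5) (Fin 5) ℝ) 2 b
      + (↑g : Matrix (Fin 5) (Fin 5) ℝ) 3 3 * (↑g⁻¹ : Matrix (Fin 5) (Fin 5) ℝ) 3 b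
      = (1 : Matrix (Fin 5) (Fin 5) ℝ) 3 b := by
    intro b; have := hme 3 b
    rw [Fin.sum_univ_five] at this
    rw [z30, z31, z34] at this; linarith [this]
  have hdet : ((↑g : Matrix (Fin 5) (Fin 5) ℝ) 2 2 * (↑g : Matrix (Fin 5) (Fin 5) ℝ) 3 3
      - (↑g : Matrix (Fin 5) (Fin 5) ℝ) 2 3 * (↑g : Matrix (Fin 5) (Fin 5) ℝ) 3 2) ≠ 0 :=
    ne_of_gt hd
  have i01 : (↑g⁻¹ : Matrix (Fin 5) (Fin 5) ℝ) 0 1 = 0 := by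
    have := r0 1; rw [Matrix.one_apply_ne (by decide)] at this
    exact (mul_eq_zero.mp this).resolve_left (ne_of_gt h0)
  have i02 : (↑g⁻¹ : Matrix (Fin 5) (Fin 5) ℝ) 0 2 = 0 := by
    have := r0 2; rw [Matrix.one_apply_ne (by decide)] at this
    exact (mul_eq_zero.mp this).resolve_left (ne_of_gt h0)
  have i03 : (↑g⁻¹ : Matrix (Fin 5) (Fin 5) ℝ) 0 3 = 0 := by
    have := r0 3; rw [Matrix.one_apply_ne (by decide)] at this
    exact (mul_eq_zero.mp this).resolve_left (ne_of_gt h0)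
  have i04 : (↑g⁻¹ : Matrix (Fin 5) (Fin 5) ℝ) 0 4 = 0 := by
    have := r0 4; rw [Matrix.one_apply_ne (by decide)] at this
    exact (mul_eq_zero.mp this).resolve_left (ne_of_gt h0)
  have i10 : (↑g⁻¹ : Matrix (Fin 5) (Fin 5) ℝ) 1 0 = 0 := by
    have := r1 0; rw [Matrix.one_apply_ne (by decide)] at this
    exact (mul_eq_zero.mp this).resolve_left (ne_of_gt h1)
  have i12 : (↑g⁻¹ : Matrix (Fin 5) (Fin 5) ℝ) 1 2 = 0 := by
    have := r1 2; rw [Matrix.one_apply_ne (by decide)] at this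
    exact (mul_eq_zero.mp this).resolve_left (ne_of_gt h1)
  have i13 : (↑g⁻¹ : Matrix (Fin 5) (Fin 5) ℝ) 1 3 = 0 := by
    have := r1 3; rw [Matrix.one_apply_ne (by decide)] at this
    exact (mul_eq_zero.mp this).resolve_left (ne_of_gt h1)
  have i14 : (↑g⁻¹ : Matrix (Fin 5) (Fin 5) ℝ) 1 4 = 0 := by
    have := r1 4; rw [Matrix.one_apply_ne (by decide)] at this
    exact (mul_eq_zero.mp this).resolve_left (ne_of_gt h1)
  have i2z : ∀ b : Fin 5, b = 0 ∨ b = 1 ∨ b = 4 →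
      (↑g⁻¹ : Matrix (Fin 5) (Fin 5) ℝ) 2 b = 0 ∧ (↑g⁻¹ : Matrix (Fin 5) (Fin 5) ℝ) 3 b = 0 := by
    intro b hb
    have e2 := r2 b
    have e3 := r3 b
    have hb2 : (1 : Matrix (Fin 5) (Fin 5) ℝ) 2 b = 0 := by
      rcases hb with h|h|h <;> subst h <;> rw [Matrix.one_apply_ne (by decide)]
    have hb3 : (1 : Matrix (Fin 5) (Fin 5) ℝ) 3 b = 0 := by
      rcases hb with h|h|h <;> subst h <;> rw [Matrix.one_apply_ne (by decide)]
    rw [hb2] at e2; rw [hb3] at e3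
    constructor
    · have key : ((↑g : Matrix (Fin 5) (Fin 5) ℝ) 2 2 * (↑g : Matrix (Fin 5) (Fin 5) ℝ) 3 3
        - (↑g : Matrix (Fin 5) (Fin 5) ℝ) 2 3 * (↑g : Matrix (Fin 5) (Fin 5) ℝ) 3 2)
          * (↑g⁻¹ : Matrix (Fin 5) (Fin 5) ℝ) 2 b = 0 := by
        linear_combination (↑g : Matrix (Fin 5) (Fin 5) ℝ) 3 3 * e2
          - (↑g : Matrix (Fin 5) (Fin 5) ℝ) 2 3 * e3
      exact (mul_eq_zero.mp key).resolve_left hdet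
    · have key : ((↑g : Matrix (Fin 5) (Fin 5) ℝ) 2 2 * (↑g : Matrix (Fin 5) (Fin 5) ℝ) 3 3
        - (↑g : Matrix (Fin 5) (Fin 5) ℝ) 2 3 * (↑g : Matrix (Fin 5) (Fin 5) ℝ) 3 2)
          * (↑g⁻¹ : Matrix (Fin 5) (Fin 5) ℝ) 3 b = 0 := by
        linear_combination (↑g : Matrix (Fin 5) (Fin 5) ℝ) 2 2 * e3
          - (↑g : Matrix (Fin 5) (Fin 5) ℝ) 3 2 * e2
      exact (mul_eq_zero.mp key).resolve_left hdet
  have i20 := (i2z 0 (Or.inl rfl)).1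
  have i21 := (i2z 1 (Or.inr (Or.inl rfl))).1
  have i24 := (i2z 4 (Or.inr (Or.inr rfl))).1
  have i30 := (i2z 0 (Or.inl rfl)).2
  have i31 := (i2z 1 (Or.inr (Or.inl rfl))).2
  have i34 := (i2z 4 (Or.inr (Or.inr rfl))).2
  have hgm : (↑g : Matrix (Fin 5) (Fin 5) ℝ) = Matrix.of (fun a b =>
      if a = 0 ∧ b = 0 then (↑g : Matrix (Fin 5) (Fin 5) ℝ) 0 0
      else if a = 1 ∧ b = 1 then (↑g : Matrix (Fin 5) (Fin 5) ℝ) 1 1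
      else if a = 4 ∧ b = 4 then (↑g : Matrix (Fin 5) (Fin 5) ℝ) 4 4
      else if a = 2 ∧ b = 2 then (↑g : Matrix (Fin 5) (Fin 5) ℝ) 2 2
      else if a = 2 ∧ b = 3 then (↑g : Matrix (Fin 5) (Fin 5) ℝ) 2 3
      else if a = 3 ∧ b = 2 then (↑g : Matrix (Fin 5) (Fin 5) ℝ) 3 2
      else if a = 3 ∧ b = 3 then (↑g : Matrix (Fin 5) (Fin 5) ℝ) 3 3
      else 0) := by
    funext a b
    fin_cases a <;> fin_cases b <;>
      simp (config := { decide := true }) only [Matrix.of_apply, ite_true, ite_false] <;>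
      first | rfl | exact hz _ _ (by decide)
  have hgi : (↑g⁻¹ : Matrix (Fin 5) (Fin 5) ℝ) = Matrix.of (fun a b =>
      if a = 0 ∧ b = 0 then (↑g⁻¹ : Matrix (Fin 5) (Fin 5) ℝ) 0 0
      else if a = 1 ∧ b = 1 then (↑g⁻¹ : Matrix (Fin 5) (Fin 5) ℝ) 1 1
      else if a = 4 ∧ b = 4 then (↑g⁻¹ : Matrix (Fin 5) (Fin 5) ℝ) 4 4
      else if a = 2 ∧ b = 2 then (↑g⁻¹ : Matrix (Fin 5) (Fin 5) ℝ) 2 2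
      else if a = 2 ∧ b = 3 then (↑g⁻¹ : Matrix (Fin 5) (Fin 5) ℝ) 2 3
      else if a = 3 ∧ b = 2 then (↑g⁻¹ : Matrix (Fin 5) (Fin 5) ℝ) 3 2
      else if a = 3 ∧ b = 3 then (↑g⁻¹ : Matrix (Fin 5) (Fin 5) ℝ) 3 3
      else if a = 4 ∧ b = 0 then (↑g⁻¹ : Matrix (Fin 5) (Fin 5) ℝ) 4 0
      else if a = 4 ∧ b = 1 then (↑g⁻¹ : Matrix (Fin 5) (Fin 5) ℝ) 4 1
      else if a = 4 ∧ b = 2 then (↑g⁻¹ : Matrix (Fin 5) (Fin 5) ℝ) 4 2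
      else if a = 4 ∧ b = 3 then (↑g⁻¹ : Matrix (Fin 5) (Fin 5) ℝ) 4 3
      else 0) := by
    funext a b
    fin_cases a <;> fin_cases b <;>
      simp (config := { decide := true }) only [Matrix.of_apply, ite_true, ite_false] <;>
      first
      | rfl
      | exact i01 | exact i02 | exact i03 | exact i04
      | exact i10 | exact i12 | exact i13 | exact i14
      | exact i20 | exact i21 | exact i24
      | exact i30 | exact i31 | exact i34
  funext i j k
  simp only [actGL_lam5]
  rw [hgm, hgi]
  fin_cases i <;> fin_cases j <;> fin_cases k <;>
  · simp (config := { decide := true }) only [comb5, wtArr, Matrix.of_apply,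
      ite_true, ite_false]
    norm_num
    try ring
    try exact Or.inl trivial

/-! ### The orbit itself: explicit group elements -/

def gmat5 (x y z w : ℝ) : Matrix (Fin 5) (Fin 5) ℝ :=
  Matrix.of fun i j =>
    if i = 0 ∧ j = 0 then 1 else if i = 1 ∧ j = 1 then 1
    else if i = 2 ∧ j = 2 then (x+w)/2 else if i = 2 ∧ j = 3 then (x-w)/2
    else if i = 3 ∧ j = 2 then (y-z)/2 else if i = 3 ∧ j = 3 then (y+z)/2
    else if i = 4 ∧ j = 4 then (x*z+y*w)/2 else 0

def ginv5 (x y z w : ℝ) : Matrix (Fin 5) (Fin 5) ℝ :=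
  Matrix.of fun i j =>
    if i = 0 ∧ j = 0 then 1 else if i = 1 ∧ j = 1 then 1
    else if i = 2 ∧ j = 2 then (y+z)/(x*z+y*w) else if i = 2 ∧ j = 3 then (w-x)/(x*z+y*w)
    else if i = 3 ∧ j = 2 then (z-y)/(x*z+y*w) else if i = 3 ∧ j = 3 then (x+w)/(x*z+y*w)
    else if i = 4 ∧ j = 4 then 2/(x*z+y*w) else 0

set_option maxHeartbeats 1000000 in
lemma gmul5 (x y z w : ℝ) (hQ : 0 < x*z+y*w) :
    gmat5 x y z w * ginv5 x y z w = 1 ∧ ginv5 x y z w * gmat5 x y z w = 1 := by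
  have h : x*z+y*w ≠ 0 := ne_of_gt hQ
  have h1 : x*z+w*y ≠ 0 := by rw [mul_comm w y]; exact h
  have h2 : y*w+z*x ≠ 0 := by rw [add_comm, mul_comm z x]; exact h
  have h3 : z*x+y*w ≠ 0 := by rw [mul_comm z x]; exact h
  constructor <;>
  · ext a b
    fin_cases a <;> fin_cases b <;>
    · simp (config := { decide := true }) [gmat5, ginv5, Matrix.mul_apply, Fin.sum_univ_five,
        Matrix.one_apply]
      try field_simp
      try ring
      try exact h

def gU5 (x y z w : ℝ) (hQ : 0 < x*z+y*w) : (Matrix (Fin 5) (Fin 5) ℝ)ˣ :=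
  ⟨gmat5 x y z w, ginv5 x y z w, (gmul5 x y z w hQ).1, (gmul5 x y z w hQ).2⟩

set_option maxHeartbeats 1000000 in
lemma gU5_act (x y z w : ℝ) (hQ : 0 < x*z+y*w) :
    actGL (gU5 x y z w hQ) lam5 = comb5 x y z w := by
  have h : x*z+y*w ≠ 0 := ne_of_gt hQ
  have h1 : x*z+w*y ≠ 0 := by rw [mul_comm w y]; exact h
  have h2 : y*w+z*x ≠ 0 := by rw [add_comm, mul_comm z x]; exact h
  have h3 : z*x+y*w ≠ 0 := by rw [mul_comm z x]; exact h
  have hc : (↑(gU5 x y z w hQ)⁻¹ : Matrix (Fin 5) (Fin 5) ℝ) = ginv5 x y z w := rfl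
  have hv : (↑(gU5 x y z w hQ) : Matrix (Fin 5) (Fin 5) ℝ) = gmat5 x y z w := rfl
  funext i j k
  rw [actGL_lam5, hc, hv]
  fin_cases i <;> fin_cases j <;> fin_cases k <;>
  · simp (config := { decide := true }) only [gmat5, ginv5, comb5, wtArr,
      Matrix.of_apply, ite_true, ite_false]
    norm_num
    try field_simp
    try ring

lemma gU5_mem (x y z w : ℝ) (hQ : 0 < x*z+y*w) : gU5 x y z w hQ ∈ G17 := by
  have hv : (↑(gU5 x y z w hQ) : Matrix (Fin 5) (Fin 5) ℝ) = gmat5 x y z w := rfl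
  refine ⟨?_, ?_, ?_, ?_, ?_⟩
  · intro i j hij
    rw [hv]
    fin_cases i <;> fin_cases j <;>
      first
      | exact absurd (by decide) hij
      | simp (config := { decide := true }) [gmat5]
  · rw [hv]; simp (config := { decide := true }) [gmat5]
  · rw [hv]; simp (config := { decide := true }) [gmat5]
  · rw [hv]
    have : gmat5 x y z w 4 4 = (x*z+y*w)/2 := by
      simp (config := { decide := true }) [gmat5]
    rw [this]; positivity
  · rw [hv]
    have h22 : gmat5 x y z w 2 2 = (x+w)/2 := by
      simp (config := { decide := true }) [gmat5]
    have h23 : gmat5 x y z w 2 3 = (x-w)/2 := by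
      simp (config := { decide := true }) [gmat5]
    have h32 : gmat5 x y z w 3 2 = (y-z)/2 := by
      simp (config := { decide := true }) [gmat5]
    have h33 : gmat5 x y z w 3 3 = (y+z)/2 := by
      simp (config := { decide := true }) [gmat5]
    rw [h22, h23, h32, h33]
    nlinarith [hQ]

/-! ### Topological lemmas -/

def V5 : Set (Fin 5 → Fin 5 → Fin 5 → ℝ) :=
  {c | c = comb5 (c 0 1 2) (c 0 1 3) (c 0 2 4) (c 0 3 4)}

lemma V5_closed : IsClosed V5 := by
  have hev : ∀ a b l : Fin 5, Continuous (fun c : Fin 5 → Fin 5 → Fin 5 → ℝ => c a b l) :=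
    fun a b l => (continuous_apply l).comp ((continuous_apply b).comp (continuous_apply a))
  have hc : Continuous (fun c : Fin 5 → Fin 5 → Fin 5 → ℝ =>
      comb5 (c 0 1 2) (c 0 1 3) (c 0 2 4) (c 0 3 4)) := by
    apply continuous_pi; intro i; apply continuous_pi; intro j; apply continuous_pi; intro k
    simp only [comb5]
    exact ((((hev 0 1 2).mul continuous_const).add ((hev 0 1 3).mul continuous_const)).add
      ((hev 0 2 4).mul continuous_const)).add ((hev 0 3 4).mul continuous_const)
  exact isClosed_eq continuous_id hc

lemma closure_orbit_sub_V5 :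
    closure {c' | ∃ g ∈ G17, c' = actGL g lam5} ⊆ V5 := by
  apply closure_minimal _ V5_closed
  rintro c ⟨g, hg, rfl⟩
  exact orbit_V5 g hg

lemma comb5_mem_closure (x y z w : ℝ) (hx : 0 ≤ x) (hy : 0 ≤ y) (hz : 0 ≤ z) (hw : 0 ≤ w)
    (hS : 0 < x^2+y^2+z^2+w^2) :
    comb5 x y z w ∈ closure {c' | ∃ g ∈ G17, c' = actGL g lam5} := by
  have hF : Continuous (fun t : ℝ => comb5 (x+t*z) (y+t*w) (z+t*x) (w+t*y)) := by
    apply continuous_pi; intro i; apply continuous_pi; intro j; apply continuous_pi; intro k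
    simp only [comb5]
    continuity
  have ht : Filter.Tendsto (fun n : ℕ => (1/(n+1) : ℝ)) Filter.atTop (nhds 0) :=
    tendsto_one_div_add_atTop_nhds_zero_nat
  have hten := (hF.tendsto 0).comp ht
  have h0 : comb5 (x+0*z) (y+0*w) (z+0*x) (w+0*y) = comb5 x y z w := by norm_num
  have hten2 : Filter.Tendsto (fun n : ℕ => comb5 (x+(1/(n+1:ℝ))*z) (y+(1/(n+1:ℝ))*w)
      (z+(1/(n+1:ℝ))*x) (w+(1/(n+1:ℝ))*y)) Filter.atTop (nhds (comb5 x y z w)) := by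
    simpa [Function.comp_def, h0] using hten
  refine mem_closure_of_tendsto hten2 ?_
  · filter_upwards with n
    have htp : 0 < (1/(n+1) : ℝ) := by positivity
    have hQ : 0 < (x+(1/(n+1))*z)*(z+(1/(n+1))*x) + (y+(1/(n+1))*w)*(w+(1/(n+1))*y) := by
      nlinarith [mul_pos htp hS, mul_nonneg hx hz, mul_nonneg hy hw,
        mul_nonneg (mul_nonneg htp.le htp.le) (mul_nonneg hx hz),
        mul_nonneg (mul_nonneg htp.le htp.le) (mul_nonneg hy hw)]
    exact ⟨gU5 _ _ _ _ hQ, gU5_mem _ _ _ _ hQ, (gU5_act _ _ _ _ hQ).symm⟩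

set_option maxHeartbeats 4000000

/-- **(Example `tricky`.)** For the above 5-dimensional nilpotent Lie bracket, the diagonal
values of the moment map on the closure of the orbit `G·λ` form the set
`{a F₁₂³ + b F₁₂⁴ + c F₁₃⁵ + d F₁₄⁵ : a,b,c,d ≥ 0, a+b+c+d = 1, ab = cd}`. -/
theorem moment_image_example_dim5 :
    {M | ∃ μ, μ ≠ 0 ∧ μ ∈ closure {c' | ∃ g ∈ G17, c' = actGL g lam5} ∧
      (mm μ).IsDiag ∧ M = mm μ} =
    {M | ∃ a b c d : ℝ, 0 ≤ a ∧ 0 ≤ b ∧ 0 ≤ c ∧ 0 ≤ d ∧ a + b + c + d = 1 ∧ a * b = c * d ∧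
      M = a • Fmat 0 1 2 + b • Fmat 0 1 3 + c • Fmat 0 2 4 + d • Fmat 0 3 4} := by
  ext M
  constructor
  · rintro ⟨μ, hμ0, hμcl, hdiag, rfl⟩
    have hμV : μ ∈ V5 := closure_orbit_sub_V5 hμcl
    set x := μ 0 1 2 with hxdef
    set y := μ 0 1 3 with hydef
    set z := μ 0 2 4 with hzdef
    set w := μ 0 3 4 with hwdef
    have hμ : μ = comb5 x y z w := hμV
    have hS0 : x^2+y^2+z^2+w^2 ≠ 0 := by
      intro h
      apply hμ0
      have hx : x = 0 := by nlinarith [sq_nonneg x, sq_nonneg y, sq_nonneg z, sq_nonneg w]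
      have hy : y = 0 := by nlinarith [sq_nonneg x, sq_nonneg y, sq_nonneg z, sq_nonneg w]
      have hz : z = 0 := by nlinarith [sq_nonneg x, sq_nonneg y, sq_nonneg z, sq_nonneg w]
      have hw : w = 0 := by nlinarith [sq_nonneg x, sq_nonneg y, sq_nonneg z, sq_nonneg w]
      rw [hμ, hx, hy, hz, hw]
      exact comb5_zero
    have hSpos : 0 < x^2+y^2+z^2+w^2 :=
      lt_of_le_of_ne (by positivity) (Ne.symm hS0)
    have h23 : mm μ 2 3 = 0 := hdiag (show (2 : Fin 5) ≠ 3 by decide)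
    rw [hμ, mm_comb5 x y z w hS0] at h23
    simp (config := { decide := true }) only [Matrix.of_apply, ite_true, ite_false,
      or_true, if_true, and_true, true_and, and_false, false_and, or_false, false_or] at h23
    have hxy : x*y = z*w := by
      have := (div_eq_zero_iff.mp h23).resolve_right hS0
      linarith [this]
    refine ⟨x^2/(x^2+y^2+z^2+w^2), y^2/(x^2+y^2+z^2+w^2), z^2/(x^2+y^2+z^2+w^2),
      w^2/(x^2+y^2+z^2+w^2), by positivity, by positivity, by positivity, by positivity,
      by field_simp, ?_, ?_⟩
    · rw [div_mul_div_comm, div_mul_div_comm]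
      congr 1
      linear_combination (x*y + z*w) * hxy
    · rw [hμ, mm_comb5 x y z w hS0]
      ext i j
      fin_cases i <;> fin_cases j <;>
      · simp (config := { decide := true }) only [Matrix.of_apply, Matrix.add_apply,
          Matrix.smul_apply, Matrix.sub_apply, Fmat, Matrix.single,
          smul_eq_mul, ite_true, ite_false]
        norm_num
        try field_simp
        try ring
        try linear_combination hxy
        try exact Or.inl (by linear_combination hxy)
  · rintro ⟨a, b, c, d, ha, hb, hc, hd, hsum, habcd, rfl⟩
    set x := Real.sqrt a with hxdef
    set y := Real.sqrt b with hydef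
    set z := Real.sqrt c with hzdef
    set w := Real.sqrt d with hwdef
    have hx2 : x^2 = a := Real.sq_sqrt ha
    have hy2 : y^2 = b := Real.sq_sqrt hb
    have hz2 : z^2 = c := Real.sq_sqrt hc
    have hw2 : w^2 = d := Real.sq_sqrt hd
    have hS : x^2+y^2+z^2+w^2 = 1 := by rw [hx2, hy2, hz2, hw2]; exact hsum
    have hS0 : x^2+y^2+z^2+w^2 ≠ 0 := by rw [hS]; exact one_ne_zero
    have hxy : x*y = z*w := by
      rw [hxdef, hydef, hzdef, hwdef, ← Real.sqrt_mul ha, ← Real.sqrt_mul hc, habcd]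
    have hsub : x*y - z*w = 0 := sub_eq_zero.mpr hxy
    refine ⟨comb5 x y z w, ?_, ?_, ?_, ?_⟩
    · intro h
      have e1 : x = 0 := by rw [← comb5_eval012 x y z w, h]; rfl
      have e2 : y = 0 := by rw [← comb5_eval013 x y z w, h]; rfl
      have e3 : z = 0 := by rw [← comb5_eval024 x y z w, h]; rfl
      have e4 : w = 0 := by rw [← comb5_eval034 x y z w, h]; rfl
      rw [e1, e2, e3, e4] at hS
      norm_num at hS
    · exact comb5_mem_closure x y z w (Real.sqrt_nonneg a) (Real.sqrt_nonneg b)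
        (Real.sqrt_nonneg c) (Real.sqrt_nonneg d) (by rw [hS]; norm_num)
    · rw [mm_comb5 x y z w hS0]
      intro i j hij
      fin_cases i <;> fin_cases j <;>
      first
      | exact absurd rfl hij
      | · simp (config := { decide := true }) only [Matrix.of_apply, ite_true, ite_false,
            or_true, if_true, and_true, true_and, and_false, false_and, or_false, false_or]
          try rw [hsub, zero_div]
    · rw [mm_comb5 x y z w hS0]
      simp only [hx2, hy2, hz2, hw2, hsum]
      ext i j
      fin_cases i <;> fin_cases j <;>
      · simp (config := { decide := true }) only [Matrix.of_apply, Matrix.add_apply,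
          Matrix.smul_apply, Matrix.sub_apply, Fmat, Matrix.single,
          smul_eq_mul, ite_true, ite_false]
        norm_num
        try rw [hsub, zero_div]
        try linarith [hsum]


end
end

section
/- Let n be a nilpotent real Lie algebra with bracket λ, identified with ℝⁿ via a basis {e_i}, let D ∈ Der(n), and endow s_D = ℝf ⊕ n with the inner product for which |f| = 1, f ⊥ n and {e_i} is orthonormal. Then the Ricci operator Ric of (s_D, ⟨·,·⟩) satisfies: ⟨Ric f, f⟩ = −tr(S(D)²); ⟨Ric f, X⟩ = −tr(S(D) ∘ ad_n X) for all X ∈ n; and for all X, Y ∈ n, ⟨Ric X, Y⟩ = ⟨(Ric_λ + (1/2)[D, Dᵗ] − tr(D)·S(D)) X, Y⟩, where Ric_λ is the Ricci operator of the metric Lie algebra (n, λ, ⟨·,·⟩|_{n×n}), Dᵗ is the transpose of D and S(D) := (1/2)(D + Dᵗ). -/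
open Finset Matrix

noncomputable section

variable {m : ℕ}

/-- The matrix of `ad_n X` for the bracket `c`, so that `(adMat c X).mulVec y = br c x y`. -/
def adMat (c : Fin m → Fin m → Fin m → ℝ) (X : Fin m → ℝ) : Matrix (Fin m) (Fin m) ℝ :=
  Matrix.of fun k j => ∑ i, X i * c i j k

/-- The matrix of the Ricci operator of `(ℝ^m, c)` with the canonical inner product. -/
def ricMat (c : Fin m → Fin m → Fin m → ℝ) : Matrix (Fin m) (Fin m) ℝ :=
  Matrix.of fun a b =>
    ricciForm (Pi.basisFun ℝ (Fin m)) (brL c) (Pi.basisFun ℝ (Fin m) a) (Pi.basisFun ℝ (Fin m) b)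

lemma sBasis_repr_inl (p : ℝ × (Fin m → ℝ)) (u : Unit) : (sBasis m).repr p (Sum.inl u) = p.1 := by
  simp [sBasis, Module.Basis.prod_repr_inl, Module.Basis.singleton_repr]

lemma sBasis_repr_inr (p : ℝ × (Fin m → ℝ)) (i : Fin m) :
    (sBasis m).repr p (Sum.inr i) = p.2 i := by
  simp [sBasis, Module.Basis.prod_repr_inr, Pi.basisFun_repr]

lemma sBasis_inl (u : Unit) : sBasis m (Sum.inl u) = ((1:ℝ), (0 : Fin m → ℝ)) := by
  apply (sBasis m).repr.injective
  ext j
  obtain (⟨⟩ | j) := j <;>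
    simp [sBasis_repr_inl, sBasis_repr_inr, Module.Basis.repr_self, Finsupp.single_apply]

lemma sBasis_inr (i : Fin m) :
    sBasis m (Sum.inr i) = ((0:ℝ), Pi.single i (1:ℝ)) := by
  apply (sBasis m).repr.injective
  ext j
  obtain (⟨⟩ | j) := j <;>
    simp [sBasis_repr_inl, sBasis_repr_inr, Module.Basis.repr_self, Finsupp.single_apply,
      Pi.single_apply, eq_comm]

lemma bip_sBasis (p q : ℝ × (Fin m → ℝ)) :
    bip (sBasis m) p q = p.1 * q.1 + ∑ i, p.2 i * q.2 i := by
  simp [bip, Fintype.sum_sum_type, sBasis_repr_inl, sBasis_repr_inr]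

lemma br_single_right (c : Fin m → Fin m → Fin m → ℝ) (x : Fin m → ℝ) (p k : Fin m) :
    br c x (Pi.single p 1) k = ∑ i, x i * c i p k := by
  simp only [br]
  rw [Finset.sum_comm]
  rw [Finset.sum_eq_single p]
  · simp
  · intro b _ hb; simp [Pi.single_apply, hb]
  · simp

lemma br_single_left (c : Fin m → Fin m → Fin m → ℝ) (y : Fin m → ℝ) (p k : Fin m) :
    br c (Pi.single p 1) y k = ∑ j, y j * c p j k := by
  simp only [br]
  rw [Finset.sum_eq_single p]
  · simp [mul_comm]
  · intro b _ hb; simp [Pi.single_apply, hb]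
  · simp

lemma mulVec_single' (D : Matrix (Fin m) (Fin m) ℝ) (p k : Fin m) :
    D.mulVec (Pi.single p 1) k = D k p := by
  simp [Matrix.mulVec_single]

lemma trace_s (f : (ℝ × (Fin m → ℝ)) →ₗ[ℝ] (ℝ × (Fin m → ℝ))) :
    LinearMap.trace ℝ _ f =
      (f ((1:ℝ), (0 : Fin m → ℝ))).1 + ∑ p, (f ((0:ℝ), Pi.single p 1)).2 p := by
  rw [LinearMap.trace_eq_matrix_trace ℝ (sBasis m)]
  simp [Matrix.trace, Matrix.diag, LinearMap.toMatrix_apply, Fintype.sum_sum_type,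
    sBasis_repr_inl, sBasis_repr_inr, sBasis_inl, sBasis_inr]

lemma trace_pi (f : (Fin m → ℝ) →ₗ[ℝ] (Fin m → ℝ)) :
    LinearMap.trace ℝ _ f = ∑ p, f (Pi.single p 1) p := by
  rw [LinearMap.trace_eq_matrix_trace ℝ (Pi.basisFun ℝ (Fin m))]
  simp [Matrix.trace, Matrix.diag, LinearMap.toMatrix_apply, Pi.basisFun_repr,
    Pi.basisFun_apply]

lemma brL_apply (c : Fin m → Fin m → Fin m → ℝ) (x y : Fin m → ℝ) :
    brL c x y = br c x y := rfl

lemma foldr_replicate (c : Fin m → Fin m → Fin m → ℝ) (X y : Fin m → ℝ) (N : ℕ) :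
    (List.replicate N X).foldr (fun x a => br c x a) y = ((brL c X) ^ N) y := by
  induction N with
  | zero => simp
  | succ n ih => rw [List.replicate_succ, List.foldr_cons, ih, pow_succ']; rfl

lemma trace_ad_zero (c : Fin m → Fin m → Fin m → ℝ) (hnilp : IsNilpotentArr c)
    (X : Fin m → ℝ) : LinearMap.trace ℝ _ (brL c X) = 0 := by
  obtain ⟨N, hN⟩ := hnilp
  have hpow : (brL c X) ^ N = 0 := by
    refine LinearMap.ext fun y => ?_
    have h1 := hN (fun _ => X) y
    rw [List.ofFn_const, foldr_replicate] at h1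
    simpa using h1
  exact (LinearMap.isNilpotent_trace_of_isNilpotent ⟨N, hpow⟩).eq_zero

lemma sum_diag_zero (c : Fin m → Fin m → Fin m → ℝ) (hnilp : IsNilpotentArr c)
    (k : Fin m) : ∑ p, c k p p = 0 := by
  have := trace_ad_zero c hnilp (Pi.single k 1)
  rw [trace_pi] at this
  rw [← this]
  refine Finset.sum_congr rfl fun p _ => ?_
  rw [brL_apply, br_single_left]
  rw [Finset.sum_eq_single p] <;> simp +contextual [Pi.single_apply]


lemma ricH_s (c : Fin m → Fin m → Fin m → ℝ) (hnilp : IsNilpotentArr c)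
    (D : Matrix (Fin m) (Fin m) ℝ) :
    ricH (sBasis m) (sBr (brL c) D.mulVecLin) = (D.trace, (0 : Fin m → ℝ)) := by
  unfold ricH
  rw [Fintype.sum_sum_type]
  have h1 : ∀ u : Unit,
      LinearMap.trace ℝ _ ((sBr (brL c) D.mulVecLin) (sBasis m (Sum.inl u))) = D.trace := by
    intro u
    rw [sBasis_inl, trace_s]
    simp [sBr_apply, brL_apply, Matrix.mulVecLin_apply, mulVec_single', Matrix.trace,
      Matrix.diag, br]
  have h2 : ∀ j : Fin m,
      LinearMap.trace ℝ _ ((sBr (brL c) D.mulVecLin) (sBasis m (Sum.inr j))) = 0 := by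
    intro j
    rw [sBasis_inr, trace_s]
    simp only [sBr_apply, brL_apply]
    have : ∀ p : Fin m, br c (Pi.single j 1) (Pi.single p 1) p = c j p p := by
      intro p
      rw [br_single_left]
      rw [Finset.sum_eq_single p] <;> simp +contextual [Pi.single_apply]
    simp [this, sum_diag_zero c hnilp]
  simp only [h1, h2, zero_smul, Finset.sum_const_zero, add_zero]
  simp [sBasis_inl, Prod.ext_iff]


lemma trace_tmul (A B : Matrix (Fin m) (Fin m) ℝ) :
    Matrix.trace (Aᵀ * B) = ∑ p, ∑ q, A q p * B q p := by
  simp [Matrix.trace, Matrix.diag, Matrix.mul_apply]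

lemma trace_mmul (A B : Matrix (Fin m) (Fin m) ℝ) :
    Matrix.trace (A * B) = ∑ p, ∑ q, A p q * B q p := by
  simp [Matrix.trace, Matrix.diag, Matrix.mul_apply]

lemma part1 (c : Fin m → Fin m → Fin m → ℝ) (hnilp : IsNilpotentArr c)
    (D : Matrix (Fin m) (Fin m) ℝ) :
    ricciForm (sBasis m) (sBr (brL c) D.mulVecLin) ((1:ℝ),(0:Fin m → ℝ)) ((1:ℝ),(0:Fin m → ℝ))
      = - Matrix.trace (((1/2:ℝ) • (D + Dᵀ)) * ((1/2:ℝ) • (D + Dᵀ))) := by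
  rw [ricciForm, ricH_s c hnilp D, trace_s]
  simp only [Fintype.sum_sum_type, Finset.univ_unique, Finset.sum_singleton, sBasis_inl,
    sBasis_inr, sBr_apply, brL_apply, bip_sBasis, Matrix.mulVecLin_apply, mulVec_single']
  simp [br, sBr_apply, brL_apply, Matrix.mulVec, dotProduct, Pi.single_apply,
    mul_ite, ite_mul, Finset.sum_ite_eq, Finset.sum_ite_eq']
  simp only [Matrix.trace, Matrix.diag, Matrix.mul_apply, Matrix.add_apply, Matrix.smul_apply,
    Matrix.transpose_apply, smul_eq_mul]
  have expand : ∑ i : Fin m, ∑ j : Fin m,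
        (2⁻¹ * D i j + 2⁻¹ * D j i) * (2⁻¹ * D j i + 2⁻¹ * D i j)
      = (4⁻¹ * ∑ i : Fin m, ∑ j : Fin m, D i j * D i j)
        + (2⁻¹ * ∑ i : Fin m, ∑ j : Fin m, D i j * D j i)
        + 4⁻¹ * ∑ i : Fin m, ∑ j : Fin m, D j i * D j i := by
    simp only [Finset.mul_sum, ← Finset.sum_add_distrib]
    exact Finset.sum_congr rfl fun i _ => Finset.sum_congr rfl fun j _ => by ring
  rw [expand]
  have hA : ∑ i : Fin m, ∑ j : Fin m, D i j * D i j
      = ∑ i : Fin m, ∑ j : Fin m, D j i * D j i := Finset.sum_comm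
  rw [hA]
  ring


lemma part2 (c : Fin m → Fin m → Fin m → ℝ) (hnilp : IsNilpotentArr c)
    (D : Matrix (Fin m) (Fin m) ℝ) (X : Fin m → ℝ) :
    ricciForm (sBasis m) (sBr (brL c) D.mulVecLin) ((1:ℝ),(0:Fin m → ℝ)) ((0:ℝ),X)
      = - Matrix.trace (((1/2:ℝ) • (D + Dᵀ)) * adMat c X) := by
  rw [ricciForm, ricH_s c hnilp D, trace_s]
  simp only [Fintype.sum_sum_type, Finset.univ_unique, Finset.sum_singleton, sBasis_inl,
    sBasis_inr, sBr_apply, brL_apply, bip_sBasis, Matrix.mulVecLin_apply, mulVec_single']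
  simp [br, sBr_apply, brL_apply, Matrix.mulVec, dotProduct, Pi.single_apply,
    mul_ite, ite_mul, Finset.sum_ite_eq, Finset.sum_ite_eq']
  simp only [Matrix.trace, Matrix.diag, Matrix.mul_apply, Matrix.add_apply, Matrix.smul_apply,
    Matrix.transpose_apply, smul_eq_mul, adMat, Matrix.of_apply]
  rw [sub_eq_add_neg, ← neg_add]
  congr 1
  simp only [Finset.mul_sum, ← Finset.sum_add_distrib]
  exact Finset.sum_congr rfl fun p _ => Finset.sum_congr rfl fun q _ =>
    Finset.sum_congr rfl fun i _ => by ring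


lemma ricH_n (c : Fin m → Fin m → Fin m → ℝ) (hnilp : IsNilpotentArr c) :
    ricH (Pi.basisFun ℝ (Fin m)) (brL c) = 0 := by
  simp [ricH, trace_ad_zero c hnilp]


def K1 (c : Fin m → Fin m → Fin m → ℝ) (a b : Fin m) : ℝ := ∑ p, ∑ q, c a p q * c b p q
def K2 (c : Fin m → Fin m → Fin m → ℝ) (a b : Fin m) : ℝ := ∑ p, ∑ q, c p q a * c p q b
def K3 (c : Fin m → Fin m → Fin m → ℝ) (a b : Fin m) : ℝ := ∑ p, ∑ q, c b p q * c a q p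
def WK (c : Fin m → Fin m → Fin m → ℝ) (a b : Fin m) : ℝ :=
  -(2⁻¹) * K1 c a b + 4⁻¹ * K2 c a b - 2⁻¹ * K3 c a b

lemma sum_rot (f : Fin m → Fin m → Fin m → ℝ) :
    ∑ a, ∑ b, ∑ k, f a b k = ∑ k, ∑ b, ∑ a, f a b k := by
  calc ∑ a, ∑ b, ∑ k, f a b k = ∑ a, ∑ k, ∑ b, f a b k :=
        Finset.sum_congr rfl fun a _ => Finset.sum_comm
    _ = ∑ k, ∑ a, ∑ b, f a b k := Finset.sum_comm
    _ = ∑ k, ∑ b, ∑ a, f a b k := Finset.sum_congr rfl fun k _ => Finset.sum_comm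

lemma sum4 (f : Fin m → Fin m → Fin m → Fin m → ℝ) :
    ∑ p, ∑ q, ∑ a, ∑ b, f p q a b = ∑ a, ∑ b, ∑ p, ∑ q, f p q a b := by
  calc ∑ p, ∑ q, ∑ a, ∑ b, f p q a b
      = ∑ p, ∑ a, ∑ q, ∑ b, f p q a b :=
        Finset.sum_congr rfl fun p _ => Finset.sum_comm
    _ = ∑ a, ∑ p, ∑ q, ∑ b, f p q a b := Finset.sum_comm
    _ = ∑ a, ∑ p, ∑ b, ∑ q, f p q a b := Finset.sum_congr rfl fun a _ =>
        Finset.sum_congr rfl fun p _ => Finset.sum_comm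
    _ = ∑ a, ∑ b, ∑ p, ∑ q, f p q a b := Finset.sum_congr rfl fun a _ => Finset.sum_comm

lemma sum4' (f : Fin m → Fin m → Fin m → Fin m → ℝ) :
    ∑ p, ∑ i, ∑ q, ∑ j, f p i q j = ∑ i, ∑ j, ∑ p, ∑ q, f p i q j := by
  calc ∑ p, ∑ i, ∑ q, ∑ j, f p i q j
      = ∑ i, ∑ p, ∑ q, ∑ j, f p i q j := Finset.sum_comm
    _ = ∑ i, ∑ p, ∑ j, ∑ q, f p i q j := Finset.sum_congr rfl fun i _ =>
        Finset.sum_congr rfl fun p _ => Finset.sum_comm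
    _ = ∑ i, ∑ j, ∑ p, ∑ q, f p i q j := Finset.sum_congr rfl fun i _ => Finset.sum_comm

lemma hN1 (c : Fin m → Fin m → Fin m → ℝ) (X Y : Fin m → ℝ) :
    ∑ p, ∑ q, (∑ i, X i * c i p q) * (∑ j, Y j * c j p q)
      = ∑ a, ∑ b, X a * Y b * K1 c a b := by
  have h : ∀ p q : Fin m, (∑ i, X i * c i p q) * (∑ j, Y j * c j p q)
      = ∑ i, ∑ j, X i * Y j * (c i p q * c j p q) := fun p q => by
    rw [Finset.sum_mul_sum]
    exact Finset.sum_congr rfl fun i _ => Finset.sum_congr rfl fun j _ => by ring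
  simp_rw [h]
  rw [sum4 (fun p q i j => X i * Y j * (c i p q * c j p q))]
  refine Finset.sum_congr rfl fun a _ => Finset.sum_congr rfl fun b _ => ?_
  simp [K1, Finset.mul_sum]

lemma hN2 (c : Fin m → Fin m → Fin m → ℝ) (X Y : Fin m → ℝ) :
    ∑ p, ∑ q, (∑ i, c p q i * X i) * (∑ j, c p q j * Y j)
      = ∑ a, ∑ b, X a * Y b * K2 c a b := by
  have h : ∀ p q : Fin m, (∑ i, c p q i * X i) * (∑ j, c p q j * Y j)
      = ∑ i, ∑ j, X i * Y j * (c p q i * c p q j) := fun p q => by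
    rw [Finset.sum_mul_sum]
    exact Finset.sum_congr rfl fun i _ => Finset.sum_congr rfl fun j _ => by ring
  simp_rw [h]
  rw [sum4 (fun p q i j => X i * Y j * (c p q i * c p q j))]
  refine Finset.sum_congr rfl fun a _ => Finset.sum_congr rfl fun b _ => ?_
  simp [K2, Finset.mul_sum]

lemma hN3 (c : Fin m → Fin m → Fin m → ℝ) (X Y : Fin m → ℝ) :
    ∑ p, ∑ i, ∑ q, (X i * ∑ j, Y j * c j p q) * c i q p
      = ∑ a, ∑ b, X a * Y b * K3 c a b := by
  have h : ∀ p i q : Fin m, (X i * ∑ j, Y j * c j p q) * c i q p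
      = ∑ j, X i * Y j * (c j p q * c i q p) := fun p i q => by
    rw [Finset.mul_sum, Finset.sum_mul]
    exact Finset.sum_congr rfl fun j _ => by ring
  simp_rw [h]
  rw [sum4' (fun p i q j => X i * Y j * (c j p q * c i q p))]
  refine Finset.sum_congr rfl fun a _ => Finset.sum_congr rfl fun b _ => ?_
  simp [K3, Finset.mul_sum]

lemma K1symm (c : Fin m → Fin m → Fin m → ℝ) (a b : Fin m) : K1 c a b = K1 c b a := by
  unfold K1
  exact Finset.sum_congr rfl fun p _ => Finset.sum_congr rfl fun q _ => mul_comm _ _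

lemma K2symm (c : Fin m → Fin m → Fin m → ℝ) (a b : Fin m) : K2 c a b = K2 c b a := by
  unfold K2
  exact Finset.sum_congr rfl fun p _ => Finset.sum_congr rfl fun q _ => mul_comm _ _

lemma K3symm (c : Fin m → Fin m → Fin m → ℝ) (a b : Fin m) : K3 c a b = K3 c b a := by
  unfold K3
  rw [Finset.sum_comm]
  exact Finset.sum_congr rfl fun p _ => Finset.sum_congr rfl fun q _ => mul_comm _ _

lemma WKsymm (c : Fin m → Fin m → Fin m → ℝ) (a b : Fin m) : WK c a b = WK c b a := by
  unfold WK
  rw [K1symm, K2symm, K3symm]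

lemma ricci_n_eq (c : Fin m → Fin m → Fin m → ℝ) (hnilp : IsNilpotentArr c) (X Y : Fin m → ℝ) :
    ricciForm (Pi.basisFun ℝ (Fin m)) (brL c) X Y = ∑ a, ∑ b, X a * Y b * WK c a b := by
  rw [ricciForm, ricH_n c hnilp, trace_pi]
  simp only [Pi.basisFun_apply, brL_apply, map_zero, LinearMap.zero_apply]
  simp only [bip, Pi.basisFun_repr]
  simp [br, brL_apply, Pi.single_apply, mul_ite, ite_mul, Finset.sum_ite_eq,
    Finset.sum_ite_eq']
  rw [hN1 c X Y, hN2 c X Y, hN3 c X Y]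
  have h : ∀ a b : Fin m, X a * Y b * WK c a b
      = -(2⁻¹) * (X a * Y b * K1 c a b) + 4⁻¹ * (X a * Y b * K2 c a b)
        - 2⁻¹ * (X a * Y b * K3 c a b) := fun a b => by unfold WK; ring
  simp only [h]
  rw [Finset.sum_congr rfl fun (a : Fin m) _ => Finset.sum_sub_distrib _ _,
    Finset.sum_sub_distrib,
    Finset.sum_congr rfl fun (a : Fin m) _ => Finset.sum_add_distrib,
    Finset.sum_add_distrib]
  simp only [← Finset.mul_sum]
  ring

lemma ricMat_eq (c : Fin m → Fin m → Fin m → ℝ) (hnilp : IsNilpotentArr c) (a b : Fin m) :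
    ricMat c a b = WK c a b := by
  have : ricMat c a b = ricciForm (Pi.basisFun ℝ (Fin m)) (brL c)
      (Pi.basisFun ℝ (Fin m) a) (Pi.basisFun ℝ (Fin m) b) := rfl
  rw [this, ricci_n_eq c hnilp]
  simp [Pi.basisFun_apply, Pi.single_apply, ite_mul, Finset.sum_ite_eq, Finset.sum_ite_eq']


lemma bridge1 (D : Matrix (Fin m) (Fin m) ℝ) (X Y : Fin m → ℝ) :
    ∑ x, (∑ x1, D x1 x * X x1) * ∑ x1, D x1 x * Y x1
      = ∑ x, ∑ x1, ∑ x2, D x x2 * D x1 x2 * X x1 * Y x := by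
  rw [show (∑ x, (∑ x1, D x1 x * X x1) * ∑ x1, D x1 x * Y x1)
      = ∑ x, ∑ a, ∑ b, (D a x * X a) * (D b x * Y b) from
    Finset.sum_congr rfl fun x _ => Finset.sum_mul_sum _ _ _ _,
    sum_rot (fun x a b => (D a x * X a) * (D b x * Y b))]
  exact Finset.sum_congr rfl fun _ _ => Finset.sum_congr rfl fun _ _ =>
    Finset.sum_congr rfl fun _ _ => by ring

lemma bridge2 (D : Matrix (Fin m) (Fin m) ℝ) (X Y : Fin m → ℝ) :
    ∑ x, (∑ x1, D x x1 * X x1) * ∑ x1, D x x1 * Y x1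
      = ∑ x, ∑ x1, ∑ x2, D x2 x * D x2 x1 * X x1 * Y x := by
  rw [show (∑ x, (∑ x1, D x x1 * X x1) * ∑ x1, D x x1 * Y x1)
      = ∑ x, ∑ a, ∑ b, (D x a * X a) * (D x b * Y b) from
    Finset.sum_congr rfl fun x _ => Finset.sum_mul_sum _ _ _ _,
    sum_rot (fun x a b => (D x a * X a) * (D x b * Y b))]
  exact Finset.sum_congr rfl fun _ _ => Finset.sum_congr rfl fun _ _ =>
    Finset.sum_congr rfl fun _ _ => by ring

lemma bridge3t (D : Matrix (Fin m) (Fin m) ℝ) (t : ℝ) (X Y : Fin m → ℝ) :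
    ∑ x, (t * ∑ x1, D x x1 * X x1) * Y x = t * ∑ x, ∑ x1, D x x1 * X x1 * Y x := by
  rw [Finset.mul_sum]
  refine Finset.sum_congr rfl fun x _ => ?_
  rw [Finset.mul_sum, Finset.sum_mul, Finset.mul_sum]
  exact Finset.sum_congr rfl fun x1 _ => by ring

lemma bridge4t (D : Matrix (Fin m) (Fin m) ℝ) (t : ℝ) (X Y : Fin m → ℝ) :
    ∑ x, (t * ∑ x1, D x x1 * Y x1) * X x = t * ∑ x, ∑ x1, D x1 x * X x1 * Y x := by
  have h : ∑ x, ∑ x1, D x1 x * X x1 * Y x = ∑ x, ∑ x1, D x x1 * Y x1 * X x := by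
    rw [Finset.sum_comm]
    exact Finset.sum_congr rfl fun _ _ => Finset.sum_congr rfl fun _ _ => by ring
  rw [h, Finset.mul_sum]
  refine Finset.sum_congr rfl fun x _ => ?_
  rw [Finset.mul_sum, Finset.sum_mul, Finset.mul_sum]
  exact Finset.sum_congr rfl fun x1 _ => by ring

lemma bridgeW (c : Fin m → Fin m → Fin m → ℝ) (X Y : Fin m → ℝ) :
    ∑ x, ∑ x1, WK c x x1 * X x1 * Y x = ∑ a, ∑ b, X a * Y b * WK c a b := by
  rw [Finset.sum_comm]
  refine Finset.sum_congr rfl fun a _ => Finset.sum_congr rfl fun b _ => ?_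
  rw [WKsymm]
  ring

lemma WKcomb (c : Fin m → Fin m → Fin m → ℝ) (X Y : Fin m → ℝ) :
    ∑ a, ∑ b, X a * Y b * WK c a b
      = -(2⁻¹ * ∑ a, ∑ b, X a * Y b * K1 c a b)
        + 4⁻¹ * (∑ a, ∑ b, X a * Y b * K2 c a b)
        - 2⁻¹ * ∑ a, ∑ b, X a * Y b * K3 c a b := by
  have h : ∀ a b : Fin m, X a * Y b * WK c a b
      = -(2⁻¹) * (X a * Y b * K1 c a b) + 4⁻¹ * (X a * Y b * K2 c a b)
        - 2⁻¹ * (X a * Y b * K3 c a b) := fun a b => by unfold WK; ring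
  simp only [h]
  rw [Finset.sum_congr rfl fun (a : Fin m) _ => Finset.sum_sub_distrib _ _,
    Finset.sum_sub_distrib,
    Finset.sum_congr rfl fun (a : Fin m) _ => Finset.sum_add_distrib,
    Finset.sum_add_distrib]
  simp only [← Finset.mul_sum]
  ring

lemma lhs_eq (c : Fin m → Fin m → Fin m → ℝ) (D : Matrix (Fin m) (Fin m) ℝ)
    (X Y : Fin m → ℝ) :
    -(2⁻¹ *
          (∑ x, (∑ x1, D x x1 * X x1) * ∑ x1, D x x1 * Y x1 +
            ∑ x, ∑ x1, (∑ x2, X x2 * c x2 x x1) * ∑ x2, Y x2 * c x2 x x1)) +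
        4⁻¹ *
          (∑ x, (∑ x1, D x1 x * X x1) * ∑ x1, D x1 x * Y x1 +
            ∑ x, ((∑ x1, D x1 x * X x1) * ∑ x1, D x1 x * Y x1 +
              ∑ x1, (∑ x2, c x x1 x2 * X x2) * ∑ x2, c x x1 x2 * Y x2)) -
      2⁻¹ * ∑ x, ∑ x1, ∑ x2, (X x1 * ∑ x3, Y x3 * c x3 x x2) * c x1 x2 x -
      2⁻¹ *
        (∑ x, (D.trace * ∑ x1, D x x1 * X x1) * Y x +
          ∑ x, (D.trace * ∑ x1, D x x1 * Y x1) * X x)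
    = (∑ a, ∑ b, X a * Y b * WK c a b)
        + 2⁻¹ * (∑ x, ∑ x1, ∑ x2, D x x2 * D x1 x2 * X x1 * Y x)
        - 2⁻¹ * (∑ x, ∑ x1, ∑ x2, D x2 x * D x2 x1 * X x1 * Y x)
        - D.trace * (2⁻¹ * (∑ x, ∑ x1, D x x1 * X x1 * Y x)
            + 2⁻¹ * (∑ x, ∑ x1, D x1 x * X x1 * Y x)) := by
  rw [Finset.sum_congr rfl fun (x : Fin m) _ => congrArg
    (fun z => (∑ x1, D x1 x * X x1) * (∑ x1, D x1 x * Y x1) + z) rfl]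
  rw [Finset.sum_add_distrib, hN1 c X Y, hN2 c X Y, hN3 c X Y, bridge1 D X Y,
    bridge2 D X Y, bridge3t D D.trace X Y, bridge4t D D.trace X Y, WKcomb c X Y]
  ring


lemma rhs_eq (c : Fin m → Fin m → Fin m → ℝ) (hnilp : IsNilpotentArr c)
    (D : Matrix (Fin m) (Fin m) ℝ) (X Y : Fin m → ℝ) :
    ∑ x, (∑ x1, (ricMat c x x1
          + 2⁻¹ * (∑ x2, D x x2 * D x1 x2 - ∑ x2, D x2 x * D x2 x1)
          - D.trace * (2⁻¹ * (D x x1 + D x1 x))) * X x1) * Y x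
    = (∑ a, ∑ b, X a * Y b * WK c a b)
        + 2⁻¹ * (∑ x, ∑ x1, ∑ x2, D x x2 * D x1 x2 * X x1 * Y x)
        - 2⁻¹ * (∑ x, ∑ x1, ∑ x2, D x2 x * D x2 x1 * X x1 * Y x)
        - D.trace * (2⁻¹ * (∑ x, ∑ x1, D x x1 * X x1 * Y x)
            + 2⁻¹ * (∑ x, ∑ x1, D x1 x * X x1 * Y x)) := by
  simp_rw [ricMat_eq c hnilp, Finset.sum_mul]
  have hterm : ∀ x x1 : Fin m,
      (WK c x x1 + 2⁻¹ * (∑ x2, D x x2 * D x1 x2 - ∑ x2, D x2 x * D x2 x1)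
          - D.trace * (2⁻¹ * (D x x1 + D x1 x))) * X x1 * Y x
        = WK c x x1 * X x1 * Y x
          + 2⁻¹ * (∑ x2, D x x2 * D x1 x2 * X x1 * Y x)
          - 2⁻¹ * (∑ x2, D x2 x * D x2 x1 * X x1 * Y x)
          - D.trace * (2⁻¹ * (D x x1 * X x1 * Y x) + 2⁻¹ * (D x1 x * X x1 * Y x)) := by
    intro x x1
    rw [show ∑ x2, D x x2 * D x1 x2 * X x1 * Y x
        = (∑ x2, D x x2 * D x1 x2) * (X x1 * Y x) by
      rw [Finset.sum_mul]
      exact Finset.sum_congr rfl fun _ _ => by ring]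
    rw [show ∑ x2, D x2 x * D x2 x1 * X x1 * Y x
        = (∑ x2, D x2 x * D x2 x1) * (X x1 * Y x) by
      rw [Finset.sum_mul]
      exact Finset.sum_congr rfl fun _ _ => by ring]
    ring
  simp_rw [hterm]
  rw [Finset.sum_congr rfl fun (x : Fin m) _ => Finset.sum_sub_distrib _ _,
    Finset.sum_sub_distrib,
    Finset.sum_congr rfl fun (x : Fin m) _ => Finset.sum_sub_distrib _ _,
    Finset.sum_sub_distrib,
    Finset.sum_congr rfl fun (x : Fin m) _ => Finset.sum_add_distrib,
    Finset.sum_add_distrib]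
  simp only [← Finset.mul_sum]
  rw [Finset.sum_congr rfl fun (x : Fin m) _ => Finset.sum_add_distrib,
    Finset.sum_add_distrib]
  simp only [← Finset.mul_sum]
  rw [bridgeW c X Y]

lemma part3 (c : Fin m → Fin m → Fin m → ℝ) (hnilp : IsNilpotentArr c)
    (D : Matrix (Fin m) (Fin m) ℝ) (X Y : Fin m → ℝ) :
    ricciForm (sBasis m) (sBr (brL c) D.mulVecLin) ((0:ℝ),X) ((0:ℝ),Y)
      = ((ricMat c + (1/2 : ℝ) • (D * Dᵀ - Dᵀ * D)
          - D.trace • ((1/2 : ℝ) • (D + Dᵀ))).mulVec X) ⬝ᵥ Y := by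
  rw [ricciForm, ricH_s c hnilp D, trace_s]
  simp only [Fintype.sum_sum_type, Finset.univ_unique, Finset.sum_singleton, sBasis_inl,
    sBasis_inr, sBr_apply, brL_apply, bip_sBasis, Matrix.mulVecLin_apply, mulVec_single']
  simp only [Matrix.mulVec, dotProduct, Matrix.sub_apply, Matrix.add_apply,
    Matrix.smul_apply, Matrix.mul_apply, Matrix.transpose_apply, smul_eq_mul]
  simp [br, sBr_apply, brL_apply, Matrix.mulVec, dotProduct, Pi.single_apply,
    mul_ite, ite_mul, Finset.sum_ite_eq, Finset.sum_ite_eq']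
  rw [lhs_eq c D X Y, rhs_eq c hnilp D X Y]

/-- The block form of the Ricci operator of `s_D = ℝ f ⊕ n` with the inner product for which
`|f| = 1`, `f ⊥ n` and `{e_i}` is orthonormal:
`⟨Ric f, f⟩ = -tr S(D)²`, `⟨Ric f, X⟩ = -tr (S(D) ∘ ad_n X)`, and on `n × n` it is
`Ric_λ + ½[D, Dᵀ] - (tr D) S(D)`, where `S(D) = ½(D + Dᵀ)`. -/
theorem ricci_of_solvable_extension
    (m : ℕ) (c : Fin m → Fin m → Fin m → ℝ)
    (hlie : IsLieArr c) (hnilp : IsNilpotentArr c)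
    (D : Matrix (Fin m) (Fin m) ℝ) (hder : IsDerivM c D) :
    (ricciForm (sBasis m) (sBr (brL c) D.mulVecLin)
        ((1 : ℝ), (0 : Fin m → ℝ)) ((1 : ℝ), (0 : Fin m → ℝ)) =
      - Matrix.trace (((1/2 : ℝ) • (D + Dᵀ)) * ((1/2 : ℝ) • (D + Dᵀ)))) ∧
    (∀ X : Fin m → ℝ,
      ricciForm (sBasis m) (sBr (brL c) D.mulVecLin) ((1 : ℝ), (0 : Fin m → ℝ)) ((0 : ℝ), X) =
      - Matrix.trace (((1/2 : ℝ) • (D + Dᵀ)) * adMat c X)) ∧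
    (∀ X Y : Fin m → ℝ,
      ricciForm (sBasis m) (sBr (brL c) D.mulVecLin) ((0 : ℝ), X) ((0 : ℝ), Y) =
      ((ricMat c + (1/2 : ℝ) • (D * Dᵀ - Dᵀ * D)
        - D.trace • ((1/2 : ℝ) • (D + Dᵀ))).mulVec X) ⬝ᵥ Y) :=
  ⟨part1 c hnilp D, fun X => part2 c hnilp D X, fun X Y => part3 c hnilp D X Y⟩

end
end
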